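/- arXiv:1911.05581 — 3 statements merged into one kernel-verified Lean document; each statement's English description precedes it below -/
import Mathlib

section
/- (Chen–Stein method.) Let I be a finite index set and let (X_t)_{t∈I} and (X'_t)_{t∈I} be two {0,1}-valued processes such that X_t has the same distribution as X'_t for every t ∈ I and (X'_t) is an independent Bernoulli process. For each t ∈ I choose a neighbourhood B_t ⊆ I with t ∈ B_t. Write p_t = P(X_t = 1), p_{rs} = P(X_r = 1, X_s = 1), and set b_1 = Σ_t Σ_{s∈B_t} p_t p_s, b_2 = Σ_t Σ_{s∈B_t\{t}} p_{st}, b_3 = Σ_t E| E[X_t − p_t | X_s, s ∉ B_t] |. Then the total variation distance between the law of (X_t)_{t∈I} and the law of (X'_t)_{t∈I} is at most 8(b_1 + b_2 + b_3). -/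
noncomputable section

namespace PaperFormal

/-- A process together with its underlying probability space. -/
structure RVSetup (S : Type) where
  Ω : Type
  [m : MeasurableSpace Ω]
  P : MeasureTheory.Measure Ω
  X : ℕ → Ω → S

attribute [instance] RVSetup.m

/-- A field (process indexed by a set of vertices `V`) together with its
underlying probability space. -/
structure FieldSetup (S V : Type) where
  Ω : Type
  [m : MeasurableSpace Ω]
  P : MeasureTheory.Measure Ω
  F : V → Ω → S

attribute [instance] FieldSetup.m

/-- A family of walks (one starting measure for each point of `S`) on a common
path space. -/
structure FamilySetup (S : Type) where
  Ω : Type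
  [m : MeasurableSpace Ω]
  P : S → MeasureTheory.Measure Ω
  X : ℕ → Ω → S

attribute [instance] FamilySetup.m

open MeasureTheory ProbabilityTheory Filter Set
open scoped ENNReal NNReal Topology Classical


/-! ### Basic measurable-space conventions -/

instance setMS {β : Type*} : MeasurableSpace (Set β) := ⊤
instance zmodMS {n : ℕ} : MeasurableSpace (ZMod n) := ⊤

/-- Total variation distance between two measures. -/
def tvDist {A : Type*} [MeasurableSpace A] (μ ν : Measure A) : ℝ :=
  ⨆ E : {E : Set A // MeasurableSet E}, |(μ E).toReal - (ν E).toReal|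

/-- Coercion `ℕ∞ → ℝ≥0∞`. -/
def toE (k : ℕ∞) : ℝ≥0∞ := ENat.toENNReal k

/-! ### State spaces: the torus `ℤ_n^d` and the lattice `ℤ^d` -/

/-- The torus `ℤ_n^d`. -/
abbrev Torus (n d : ℕ) := Fin d → ZMod n

/-- The lattice `ℤ^d`. -/
abbrev Zd (d : ℕ) := Fin d → ℤ

/-- Nearest-neighbour relation on `R^d` for a ring `R` (used for `ZMod n` and `ℤ`). -/
def nbr {d : ℕ} {R : Type*} [Add R] [Sub R] [One R] (x y : Fin d → R) : Prop :=
  ∃ i : Fin d, (y i = x i + 1 ∨ y i = x i - 1) ∧ ∀ j, j ≠ i → y j = x j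

/-- One-step transition probability of the simple random walk in dimension `d`. -/
def stepProb {d : ℕ} {R : Type*} [Add R] [Sub R] [One R] (x y : Fin d → R) : ℝ≥0∞ :=
  if nbr x y then (2 * (d : ℝ≥0∞))⁻¹ else 0

/-- The Markov property with simple-random-walk one-step transition probabilities. -/
def IsMarkovSRW {Ω : Type} [MeasurableSpace Ω] {d : ℕ} {R : Type} [Add R] [Sub R] [One R]
    (P : Measure Ω) (X : ℕ → Ω → (Fin d → R)) : Prop :=
  ∀ (t : ℕ) (w : ℕ → (Fin d → R)) (y : Fin d → R),
    P ({ω | ∀ i ≤ t, X i ω = w i} ∩ {ω | X (t + 1) ω = y})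
      = P {ω | ∀ i ≤ t, X i ω = w i} * stepProb (w t) y

/-- `W` is a simple random walk on `ℤ_n^d` started from its stationary (uniform) distribution. -/
def RVSetup.IsStationarySRW {n d : ℕ} (W : RVSetup (Torus n d)) : Prop :=
  IsProbabilityMeasure W.P ∧ (∀ t, Measurable (W.X t)) ∧
    (∀ x : Torus n d, W.P {ω | W.X 0 ω = x} = ((n : ℝ≥0∞) ^ d)⁻¹) ∧
    IsMarkovSRW W.P W.X

/-- `W` is a simple random walk on `ℤ^d` started from `x0`. -/
def RVSetup.IsSRWFrom {d : ℕ} (W : RVSetup (Zd d)) (x0 : Zd d) : Prop :=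
  IsProbabilityMeasure W.P ∧ (∀ t, Measurable (W.X t)) ∧
    W.P {ω | W.X 0 ω = x0} = 1 ∧ IsMarkovSRW W.P W.X

/-! ### Hitting times, uncovered set, cover time -/

/-- First time `≥ s` at which the process is in `A` (`⊤` if never). -/
def hitFrom {Ω S : Type*} (X : ℕ → Ω → S) (A : Set S) (s : ℕ∞) (ω : Ω) : ℕ∞ :=
  sInf {t : ℕ∞ | ∃ k : ℕ, t = (k : ℕ∞) ∧ s ≤ (k : ℕ∞) ∧ X k ω ∈ A}

/-- Hitting time `τ_x` of the point `x`. -/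
def hitTime {Ω S : Type*} (X : ℕ → Ω → S) (x : S) : Ω → ℕ∞ :=
  hitFrom X {x} 0

/-- The uncovered set `𝒰(t) = {x : τ_x > t}`. -/
def uncovered {Ω : Type} {n d : ℕ} (X : ℕ → Ω → Torus n d) (t : ℝ) (ω : Ω) :
    Set (Torus n d) :=
  {x | ENNReal.ofReal t < toE (hitTime X x ω)}

/-- The law of the walk conditioned to start at `x` (i.e. the walk started at `x`). -/
def RVSetup.from' {n d : ℕ} (W : RVSetup (Torus n d)) (x : Torus n d) : Measure W.Ω :=
  ProbabilityTheory.cond W.P {ω | W.X 0 ω = x}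

/-- `max_y τ_y`. -/
def maxHit {Ω : Type} {n d : ℕ} (X : ℕ → Ω → Torus n d) (ω : Ω) : ℝ≥0∞ :=
  ⨆ y : Torus n d, toE (hitTime X y ω)

/-- The expected cover time `t_cov = max_x E_x[max_y τ_y]`. -/
def covTime {n d : ℕ} (W : RVSetup (Torus n d)) : ℝ :=
  ⨆ x : Torus n d, (∫⁻ ω, maxHit W.X ω ∂(W.from' x)).toReal

/-- The law `ν_{α,n}` of `{x : Z_x = 1}` for i.i.d. Bernoulli(`p`) variables `(Z_x)`. -/
def nuLaw (n d : ℕ) (p : ℝ) : Measure (Set (Torus n d)) :=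
  Measure.sum fun U : Finset (Torus n d) =>
    ((ENNReal.ofReal p) ^ U.card * (ENNReal.ofReal (1 - p)) ^ (n ^ d - U.card)) •
      Measure.dirac (↑U : Set (Torus n d))

/-! ### Geometry on the torus -/

/-- `|a - b| ∧ (n - |a - b|)` for `a b : ZMod n`. -/
def cdist {n : ℕ} (a b : ZMod n) : ℕ := min (a - b).val (b - a).val

/-- Closed Euclidean ball in the torus. -/
def ballT {n d : ℕ} (x : Torus n d) (r : ℝ) : Set (Torus n d) :=
  {y | (∑ i, ((cdist (y i) (x i) : ℝ)) ^ 2) ≤ r ^ 2}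

/-- Euclidean distance on the torus. -/
def tdist {n d : ℕ} (x y : Torus n d) : ℝ :=
  Real.sqrt (∑ i, ((cdist (x i) (y i) : ℝ)) ^ 2)

/-- Outer boundary of a set. -/
def obdry {d : ℕ} {R : Type} [Add R] [Sub R] [One R] (A : Set (Fin d → R)) :
    Set (Fin d → R) :=
  {y | y ∉ A ∧ ∃ x ∈ A, nbr x y}

/-! ### Excursions -/

/-- The pair `(ρ_k, ρ̃_k)` of excursion stopping times across `B(x,R) \ B(x,r)`. -/
def excTimes {Ω : Type} {n d : ℕ} (X : ℕ → Ω → Torus n d) (x : Torus n d) (r R : ℝ) :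
    ℕ → (Ω → ℕ∞) × (Ω → ℕ∞)
  | 0 =>
      let ρ : Ω → ℕ∞ := fun ω => hitFrom X (obdry (ballT x r)) 0 ω
      (ρ, fun ω => hitFrom X (ballT x R)ᶜ (ρ ω) ω)
  | k + 1 =>
      let prev := excTimes X x r R k
      let ρ : Ω → ℕ∞ := fun ω => hitFrom X (obdry (ballT x r)) (prev.2 ω) ω
      (ρ, fun ω => hitFrom X (ballT x R)ᶜ (ρ ω) ω)

/-- `ρ̃_k^x`. -/
def rhot {Ω : Type} {n d : ℕ} (X : ℕ → Ω → Torus n d) (x : Torus n d) (r R : ℝ) (k : ℕ) :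
    Ω → ℕ∞ :=
  (excTimes X x r R k).2

/-- `N_x(r,R,t)`: number of excursions across `B(x,R)\B(x,r)` completed before time `t`
(after the walk first exits `B(x,R)`). -/
def Nexc {Ω : Type} {n d : ℕ} (X : ℕ → Ω → Torus n d) (x : Torus n d) (r R t : ℝ) (ω : Ω) :
    ℕ :=
  sInf {k : ℕ |
    ENNReal.ofReal t ≤ ∑ i ∈ Finset.Icc 1 k, (toE (rhot X x r R i ω) - toE (rhot X x r R (i - 1) ω))}

/-- `Y_j`: exit point of the `j`-th excursion across `B(0,R)\B(0,r)`. -/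
def Yexit {Ω : Type} {n d : ℕ} (X : ℕ → Ω → Torus n d) (r R : ℝ) (j : ℕ) (ω : Ω) :
    Torus n d :=
  X ((rhot X (0 : Torus n d) r R j ω).toNat) ω

/-- `(K, π)` is the transition matrix and stationary distribution of the exit-point chain
`(Y_j)` of the excursions across `B(0,R)\B(0,r)`. -/
def IsExitChain {n d : ℕ} (W : RVSetup (Torus n d)) (r R : ℝ)
    (K : Torus n d → Torus n d → ℝ≥0∞) (π : Torus n d → ℝ≥0∞) : Prop :=
  (∀ (j : ℕ) (w : ℕ → Torus n d) (y : Torus n d),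
      W.P ({ω | ∀ i ≤ j, Yexit W.X r R i ω = w i} ∩ {ω | Yexit W.X r R (j + 1) ω = y})
        = W.P {ω | ∀ i ≤ j, Yexit W.X r R i ω = w i} * K (w j) y)
    ∧ (∀ x, (∑' y, K x y) = 1)
    ∧ (∑' x, π x) = 1
    ∧ (∀ y, (∑' x, π x * K x y) = π y)
    ∧ (∀ x, x ∉ obdry (ballT (0 : Torus n d) R) → π x = 0)

/-- Powers of a transition kernel. -/
def kpow {S : Type} (K : S → S → ℝ≥0∞) : ℕ → S → S → ℝ≥0∞
  | 0 => fun x y => if x = y then 1 else 0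
  | j + 1 => fun x y => ∑' z, kpow K j x z * K z y

/-- Total variation distance between two (sub)probability mass functions. -/
def massTV {S : Type} (μ ν : S → ℝ≥0∞) : ℝ :=
  ⨆ A : Set S, |(∑' a : A, μ a).toReal - (∑' a : A, ν a).toReal|

/-- Mixing time of a chain with kernel `K` and stationary distribution `π`,
with the chain started from points of `supp`. -/
def mixTime {S : Type} (K : S → S → ℝ≥0∞) (π : S → ℝ≥0∞) (supp : Set S) : ℕ :=
  sInf {j : ℕ | ∀ x ∈ supp, massTV (kpow K j x) π ≤ 1 / 4}

/-- `T_{r,R} = E_{π̃}[ρ̃_1 - ρ̃_0]`, the expected excursion length started from `π̃`. -/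
def Texc {n d : ℕ} (W : RVSetup (Torus n d)) (r R : ℝ) (π : Torus n d → ℝ≥0∞) : ℝ≥0∞ :=
  ∑' y : Torus n d, π y *
    ((∫⁻ ω in {ω | Yexit W.X r R 0 ω = y},
        (toE (rhot W.X 0 r R 1 ω) - toE (rhot W.X 0 r R 0 ω)) ∂W.P)
      / W.P {ω | Yexit W.X r R 0 ω = y})

/-- `f(a,b) = P_a(τ_0 > ρ̃_0 | X(ρ̃_0) = b)`. -/
def fExc {n d : ℕ} (W : RVSetup (Torus n d)) (r R : ℝ) (a b : Torus n d) : ℝ :=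
  ((W.from' a) ({ω | rhot W.X 0 r R 0 ω < hitTime W.X (0 : Torus n d) ω}
        ∩ {ω | Yexit W.X r R 0 ω = b})
    / (W.from' a) {ω | Yexit W.X r R 0 ω = b}).toReal

/-- `m = -E_ν[log f(Y_0, Y_1)]` where `ν(a,b) = π̃(a) K(a,b)`. -/
def mExc {n d : ℕ} (W : RVSetup (Torus n d)) (r R : ℝ)
    (K : Torus n d → Torus n d → ℝ≥0∞) (π : Torus n d → ℝ≥0∞) : ℝ :=
  -∑' a : Torus n d, ∑' b : Torus n d, (π a * K a b).toReal * Real.log (fExc W r R a b)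

/-- `t_* = (1/m) log(n^d) T_{r,R}`. -/
def tStar {n d : ℕ} (W : RVSetup (Torus n d)) (r R : ℝ)
    (K : Torus n d → Torus n d → ℝ≥0∞) (π : Torus n d → ℝ≥0∞) : ℝ :=
  (mExc W r R K π)⁻¹ * Real.log ((n : ℝ) ^ d) * (Texc W r R π).toReal

/-- `A = α t_* / ((1+δ) T_{r,R})`. -/
def Aexc {n d : ℕ} (α δ : ℝ) (W : RVSetup (Torus n d)) (r R : ℝ)
    (K : Torus n d → Torus n d → ℝ≥0∞) (π : Torus n d → ℝ≥0∞) : ℝ :=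
  α * tStar W r R K π / ((1 + δ) * (Texc W r R π).toReal)

/-- `σ_x`: first (real) time by which `A` excursions across `B(x,R)\B(x,r)` are completed. -/
def sigmaExc {Ω : Type} {n d : ℕ} (X : ℕ → Ω → Torus n d) (x : Torus n d) (r R A : ℝ)
    (ω : Ω) : ℝ :=
  sInf {t : ℝ | 0 ≤ t ∧ A ≤ (Nexc X x r R t ω : ℝ)}

/-- `τ̃_x`: first visit to `x` after first hitting `∂B(x,R)`. -/
def tauTilde {Ω : Type} {n d : ℕ} (X : ℕ → Ω → Torus n d) (x : Torus n d) (R : ℝ)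
    (ω : Ω) : ℕ∞ :=
  hitFrom X {x} (hitFrom X (obdry (ballT x R)) 0 ω) ω

/-- `Q_x = 1(τ̃_x > σ_x)`. -/
def Qx {Ω : Type} {n d : ℕ} (X : ℕ → Ω → Torus n d) (r R A : ℝ) (x : Torus n d)
    (ω : Ω) : ℝ :=
  if ENNReal.ofReal (sigmaExc X x r R A ω) < toE (tauTilde X x R ω) then 1 else 0

/-- `Ū = {x : Q_x = 1}`. -/
def Uset {Ω : Type} {n d : ℕ} (X : ℕ → Ω → Torus n d) (r R A : ℝ) (ω : Ω) :
    Set (Torus n d) :=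
  {x | Qx X r R A x ω = 1}

/-! ### The lattice `ℤ^d`: Green's function and return probability -/

/-- Green's function `G(0, x) = E[∑_t 1(X_t = x)]` for a walk `W`. -/
def greenZ {d : ℕ} (W : RVSetup (Zd d)) (x : Zd d) : ℝ :=
  (∫⁻ ω, (∑' t : ℕ, if W.X t ω = x then (1 : ℝ≥0∞) else 0) ∂W.P).toReal

/-- Return probability `p_d` of a walk `W` (started at 0). -/
def returnProb {d : ℕ} (W : RVSetup (Zd d)) : ℝ :=
  (W.P {ω | ∃ t : ℕ, 1 ≤ t ∧ W.X t ω = 0}).toReal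

/-- Euclidean norm on `ℤ^d`. -/
def znorm {d : ℕ} (x : Zd d) : ℝ := Real.sqrt (∑ i, ((x i : ℝ)) ^ 2)

/-- `c` is the constant in the asymptotic `G(0,x) ~ c ‖x‖^{2-d}`. -/
def IsGreenConst {d : ℕ} (W : RVSetup (Zd d)) (c : ℝ) : Prop :=
  ∀ z : ℕ → Zd d, Tendsto (fun k => znorm (z k)) atTop atTop →
    Tendsto (fun k => greenZ W (z k) * znorm (z k) ^ ((d : ℝ) - 2)) atTop (𝓝 c)

/-! ### The Gaussian free field on a box -/

/-- `W` is a family of simple random walks on `ℤ^d`, `W.P x` being the law of the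
walk started at `x`. -/
def FamilySetup.IsSRWFamily {d : ℕ} (W : FamilySetup (Zd d)) : Prop :=
  ∀ x : Zd d, IsProbabilityMeasure (W.P x) ∧ (∀ t, Measurable (W.X t)) ∧
    (W.P x) {ω | W.X 0 ω = x} = 1 ∧ IsMarkovSRW (W.P x) W.X

/-- The vertex set `[0,n]^d ∩ ℤ^d`. -/
def boxV (n d : ℕ) : Set (Zd d) := {x | ∀ i, 0 ≤ x i ∧ x i ≤ (n : ℤ)}

/-- The boundary `∂[0,n]^d ∩ ℤ^d`. -/
def boxBdry (n d : ℕ) : Set (Zd d) := {x | x ∈ boxV n d ∧ ∃ i, x i = 0 ∨ x i = (n : ℤ)}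

/-- The bulk `[δn, (1-δ)n]^d ∩ ℤ^d`. -/
def bulk (n d : ℕ) (δ : ℝ) : Set (Zd d) :=
  {x | ∀ i, δ * n ≤ (x i : ℝ) ∧ (x i : ℝ) ≤ (1 - δ) * n}

/-- `E_x[∑_{i=0}^{τ} 1(X_i = y)]`, where `τ` is the hitting time of
`∂[0,n]^d ∩ ℤ^d`: the covariance of the GFF on the box with zero boundary
conditions. -/
def boxGreen {d : ℕ} (W : FamilySetup (Zd d)) (n : ℕ) (x y : Zd d) : ℝ :=
  (∫⁻ ω, (∑' i : ℕ,
      if (i : ℕ∞) ≤ hitFrom W.X (boxBdry n d) 0 ω ∧ W.X i ω = y then (1 : ℝ≥0∞) else 0)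
    ∂(W.P x)).toReal

/-- Green's function of the whole-lattice walk family: `G(x,y) = E_x[∑_t 1(X_t = y)]`. -/
def latGreen {d : ℕ} (W : FamilySetup (Zd d)) (x y : Zd d) : ℝ :=
  (∫⁻ ω, (∑' t : ℕ, if W.X t ω = y then (1 : ℝ≥0∞) else 0) ∂(W.P x)).toReal

/-- Return probability `p_d` for the family `W`. -/
def famReturnProb {d : ℕ} (W : FamilySetup (Zd d)) : ℝ :=
  ((W.P 0) {ω | ∃ t : ℕ, 1 ≤ t ∧ W.X t ω = 0}).toReal

/-- `φ = G.F` is a centered Gaussian field with covariance `cov` on the vertex set `V`: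
every finite linear combination of the `φ_x`, `x ∈ V`, is a centered Gaussian
variable with the variance prescribed by `cov`. -/
def FieldSetup.IsGaussianField {I : Type} (G : FieldSetup ℝ I) (V : Set I)
    (cov : I → I → ℝ) : Prop :=
  IsProbabilityMeasure G.P ∧ (∀ x, Measurable (G.F x)) ∧
    ∀ s : Finset I, ↑s ⊆ V → ∀ c : I → ℝ,
      MeasureTheory.Measure.map (fun ω => ∑ x ∈ s, c x * G.F x ω) G.P
        = gaussianReal 0 (Real.toNNReal (∑ x ∈ s, ∑ y ∈ s, c x * c y * cov x y))

/-- The threshold `√(2 α d G(0) log n)` for `α`-high points. -/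
def highThr (d : ℕ) (α G0 : ℝ) (n : ℕ) : ℝ :=
  Real.sqrt (2 * α * d * G0 * Real.log n)

/-- The set `ℋ_α` of `α`-high points of the field `φ`. -/
def highPts {d : ℕ} (G : FieldSetup ℝ (Zd d)) (n : ℕ) (δ thr : ℝ) (ω : G.Ω) :
    Set (Zd d) :=
  {x | x ∈ bulk n d δ ∧ thr ≤ G.F x ω}

/-- `Z = B.F` is an independent field of Bernoulli random variables with
success probabilities `p`. -/
def FieldSetup.IsBernoulliField {I : Type} (B : FieldSetup Bool I) (p : I → ℝ≥0∞) :
    Prop :=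
  IsProbabilityMeasure B.P ∧ (∀ x, Measurable (B.F x)) ∧
    iIndepFun B.F B.P ∧
    ∀ x, B.P {ω | B.F x ω = true} = p x

/-- The random subset `{x ∈ bulk : Z_x = 1}` of the bulk attached to a Bernoulli field. -/
def bernSet {d : ℕ} (B : FieldSetup Bool (Zd d)) (n : ℕ) (δ : ℝ) (ω : B.Ω) :
    Set (Zd d) :=
  {x | x ∈ bulk n d δ ∧ B.F x ω = true}


/-! ### Further helpers -/

/-- Conditional probability `μ(A | B)`. -/
def condProb {Ωs : Type} [MeasurableSpace Ωs] (μ : MeasureTheory.Measure Ωs)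
    (A B : Set Ωs) : ℝ :=
  (μ (A ∩ B) / μ B).toReal

/-- Exit point `X(τ_R)` of the ball `B(0,R)`. -/
def exitPt {Ω : Type} {n d : ℕ} (X : ℕ → Ω → Torus n d) (R : ℝ) (ω : Ω) : Torus n d :=
  X ((hitFrom X (obdry (ballT (0 : Torus n d) R)) 0 ω).toNat) ω

/-- The inner radius `r = n^{γ(1-ε)}`. -/
def rad (n : ℕ) (γ ε : ℝ) : ℝ := (n : ℝ) ^ (γ * (1 - ε))

/-- The outer radius `R = n^γ`. -/
def Rad (n : ℕ) (γ : ℝ) : ℝ := (n : ℝ) ^ γ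

/-- The parameter `δ = r^{(2-d)/2} n^ψ`. -/
def deltaPar (n d : ℕ) (γ ε ψ : ℝ) : ℝ :=
  (rad n γ ε) ^ (((2 : ℝ) - d) / 2) * (n : ℝ) ^ ψ

/-- The transition kernel of the pair chain `(Y_{i-1}, Y_i)`. -/
def pairKernel {S : Type} (K : S → S → ℝ≥0∞) : S × S → S × S → ℝ≥0∞ :=
  fun p q => if q.1 = p.2 then K q.1 q.2 else 0

/-- Total variation distance between two real-valued mass functions on a finite set. -/
def finTV {S : Type} (μ ν : S → ℝ) : ℝ :=
  ⨆ A : Finset S, |∑ a ∈ A, (μ a - ν a)|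

/-- The σ-algebra `σ(Y_i : i ≥ 1)` generated by the exit points of the excursions. -/
def excSigma {n d : ℕ} (W : RVSetup (Torus n d)) (r R : ℝ) : MeasurableSpace W.Ω :=
  ⨆ i : ℕ, ⨆ _ : 1 ≤ i, MeasurableSpace.comap (Yexit W.X r R i) inferInstance


set_option linter.unusedSectionVars false

section ChenSteinAux

variable {Ωs I : Type} [MeasurableSpace Ωs] [Fintype I]

/-- Configuration value in `{0,1} ⊆ ℝ`. -/
def csVal (T : Finset I) (s : I) : ℝ := if s ∈ T then 1 else 0

/-- Event that `X` agrees with configuration `T` on `J`. -/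
def csEv (X : I → Ωs → ℝ) (J T : Finset I) : Set Ωs := {ω | ∀ s ∈ J, X s ω = csVal T s}

lemma csVal_insert_of_ne {T : Finset I} {u s : I} (h : s ≠ u) :
    csVal (insert u T) s = csVal T s := by
  simp [csVal, Finset.mem_insert, h]

lemma csEv_empty (X : I → Ωs → ℝ) (T : Finset I) : csEv X ∅ T = Set.univ := by
  ext ω; simp [csEv]

lemma measurableSet_one {X : I → Ωs → ℝ} (hmX : ∀ t, Measurable (X t)) (u : I) (c : ℝ) :
    MeasurableSet {ω | X u ω = c} :=
  hmX u (measurableSet_singleton c)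

lemma measurableSet_csEv {X : I → Ωs → ℝ} (hmX : ∀ t, Measurable (X t)) (J T : Finset I) :
    MeasurableSet (csEv X J T) := by
  have h : csEv X J T = ⋂ s ∈ J, {ω | X s ω = csVal T s} := by
    ext ω; simp [csEv]
  rw [h]
  exact MeasurableSet.biInter (J : Set I).to_countable
    fun s _ => measurableSet_one hmX s _

lemma csEv_insert_one {X : I → Ωs → ℝ} {J T : Finset I} {u : I} (hu : u ∉ J) :
    csEv X (insert u J) (insert u T) = {ω | X u ω = 1} ∩ csEv X J T := by
  ext ω
  constructor
  · intro h
    refine ⟨?_, fun s hs => ?_⟩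
    · have := h u (Finset.mem_insert_self u J)
      simpa [csVal] using this
    · have := h s (Finset.mem_insert_of_mem hs)
      rwa [csVal_insert_of_ne (fun h' => hu (by rwa [h'] at hs))] at this
  · rintro ⟨h1, h⟩ s hs
    rcases Finset.mem_insert.mp hs with rfl | hs
    · simpa [csVal] using h1
    · rw [csVal_insert_of_ne (fun h' => hu (by rwa [h'] at hs))]
      exact h s hs

lemma csEv_insert_zero {X : I → Ωs → ℝ} {J T : Finset I} {u : I} (hu : u ∉ J) (hT : u ∉ T) :
    csEv X (insert u J) T = {ω | X u ω = 0} ∩ csEv X J T := by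
  ext ω
  constructor
  · intro h
    refine ⟨?_, fun s hs => h s (Finset.mem_insert_of_mem hs)⟩
    have := h u (Finset.mem_insert_self u J)
    simpa [csVal, hT] using this
  · rintro ⟨h0, h⟩ s hs
    rcases Finset.mem_insert.mp hs with rfl | hs
    · simpa [csVal, hT] using h0
    · exact h s hs

variable (μ : Measure Ωs)

/-- `μ(csEv)` as a real number. -/
def csA (X : I → Ωs → ℝ) (J T : Finset I) : ℝ := (μ (csEv X J T)).toReal

/-- marginal probability. -/
def csP (X : I → Ωs → ℝ) (u : I) : ℝ := (μ {ω | X u ω = 1}).toReal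

/-- joint mass with `X u = 1`. -/
def csM (X : I → Ωs → ℝ) (u : I) (J T : Finset I) : ℝ :=
  (μ ({ω | X u ω = 1} ∩ csEv X J T)).toReal

/-- one-coordinate total-variation-type error. -/
def csD (X : I → Ωs → ℝ) (u : I) (J : Finset I) : ℝ :=
  ∑ T ∈ J.powerset, |csM μ X u J T - csP μ X u * csA μ X J T|

variable [IsProbabilityMeasure μ] {X : I → Ωs → ℝ}

lemma csP_nonneg (u : I) : 0 ≤ csP μ X u := ENNReal.toReal_nonneg

lemma csP_le_one (u : I) : csP μ X u ≤ 1 := by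
  have h : μ {ω | X u ω = 1} ≤ 1 := prob_le_one
  simpa [csP] using ENNReal.toReal_mono ENNReal.one_ne_top h

lemma csMeasSplit (hmX : ∀ t, Measurable (X t)) (h01 : ∀ t ω, X t ω = 0 ∨ X t ω = 1)
    {A : Set Ωs} (hA : MeasurableSet A) (u : I) :
    (μ A).toReal
      = (μ ({ω | X u ω = 1} ∩ A)).toReal + (μ ({ω | X u ω = 0} ∩ A)).toReal := by
  have h1 : MeasurableSet {ω | X u ω = 1} := measurableSet_one hmX u 1
  have h0 : MeasurableSet {ω | X u ω = 0} := measurableSet_one hmX u 0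
  have hun : A = ({ω | X u ω = 1} ∩ A) ∪ ({ω | X u ω = 0} ∩ A) := by
    ext ω
    constructor
    · intro hω
      rcases h01 u ω with h | h
      · exact Or.inr ⟨h, hω⟩
      · exact Or.inl ⟨h, hω⟩
    · rintro (⟨_, h⟩ | ⟨_, h⟩) <;> exact h
  have hdisj : Disjoint ({ω | X u ω = 1} ∩ A) ({ω | X u ω = 0} ∩ A) := by
    rw [Set.disjoint_left]
    rintro ω ⟨h1', _⟩ ⟨h0', _⟩
    simp only [Set.mem_setOf_eq] at h1' h0'
    rw [h0'] at h1'
    norm_num at h1'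
  calc (μ A).toReal
      = (μ (({ω | X u ω = 1} ∩ A) ∪ ({ω | X u ω = 0} ∩ A))).toReal := by rw [← hun]
    _ = (μ ({ω | X u ω = 1} ∩ A)).toReal + (μ ({ω | X u ω = 0} ∩ A)).toReal := by
        rw [measure_union hdisj (h0.inter hA),
          ENNReal.toReal_add (measure_ne_top _ _) (measure_ne_top _ _)]

/-- Splitting an event on a fresh coordinate. -/
lemma csSplitS (hmX : ∀ t, Measurable (X t)) (h01 : ∀ t ω, X t ω = 0 ∨ X t ω = 1)
    {S : Set Ωs} (hS : MeasurableSet S) {J T : Finset I} {u : I} (hu : u ∉ J) (hT : u ∉ T) :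
    (μ (S ∩ csEv X J T)).toReal
      = (μ (S ∩ csEv X (insert u J) (insert u T))).toReal
        + (μ (S ∩ csEv X (insert u J) T)).toReal := by
  rw [csEv_insert_one hu, csEv_insert_zero hu hT, Set.inter_left_comm S,
    Set.inter_left_comm S]
  exact csMeasSplit μ hmX h01 (hS.inter (measurableSet_csEv hmX J T)) u

lemma csSplitA (hmX : ∀ t, Measurable (X t)) (h01 : ∀ t ω, X t ω = 0 ∨ X t ω = 1)
    {J T : Finset I} {u : I} (hu : u ∉ J) (hT : u ∉ T) :
    csA μ X J T = csA μ X (insert u J) (insert u T) + csA μ X (insert u J) T := by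
  have h := csSplitS μ hmX h01 MeasurableSet.univ hu hT (X := X)
  simpa [csA, Set.univ_inter] using h

lemma csA_insert_one (hu : u ∉ J) :
    csA μ X (insert u J) (insert u T) = csM μ X u J T := by
  rw [csA, csEv_insert_one hu]; rfl

/-- Partition of any event by the configurations on `J`. -/
lemma csPartition (hmX : ∀ t, Measurable (X t)) (h01 : ∀ t ω, X t ω = 0 ∨ X t ω = 1)
    {S : Set Ωs} (hS : MeasurableSet S) (J : Finset I) :
    ∑ T ∈ J.powerset, (μ (S ∩ csEv X J T)).toReal = (μ S).toReal := by
  induction J using Finset.induction_on with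
  | empty => simp [csEv_empty]
  | @insert u J hu ih =>
      rw [Finset.sum_powerset_insert hu]
      have key : ∀ T ∈ J.powerset,
          (μ (S ∩ csEv X (insert u J) T)).toReal
            + (μ (S ∩ csEv X (insert u J) (insert u T))).toReal
          = (μ (S ∩ csEv X J T)).toReal := by
        intro T hT
        have hTJ : u ∉ T := fun h => hu (Finset.mem_powerset.mp hT h)
        rw [csSplitS μ hmX h01 hS hu hTJ]
        ring
      calc (∑ T ∈ J.powerset, (μ (S ∩ csEv X (insert u J) T)).toReal)
            + ∑ T ∈ J.powerset, (μ (S ∩ csEv X (insert u J) (insert u T))).toReal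
          = ∑ T ∈ J.powerset, ((μ (S ∩ csEv X (insert u J) T)).toReal
              + (μ (S ∩ csEv X (insert u J) (insert u T))).toReal) := by
            rw [Finset.sum_add_distrib]
        _ = ∑ T ∈ J.powerset, (μ (S ∩ csEv X J T)).toReal :=
            Finset.sum_congr rfl key
        _ = (μ S).toReal := ih

lemma csA_nonneg (J T : Finset I) : 0 ≤ csA μ X J T := ENNReal.toReal_nonneg
lemma csM_nonneg (u : I) (J T : Finset I) : 0 ≤ csM μ X u J T := ENNReal.toReal_nonneg

lemma abs_pair_le {m a q p : ℝ} (hp0 : 0 ≤ p) (hp1 : p ≤ 1) :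
    |(a - m) - (1 - p) * q| + |m - p * q| ≤ 2 * |m - p * a| + |a - q| := by
  have h1 : (a - m) - (1 - p) * q = (1 - p) * (a - q) + (p * a - m) := by ring
  have h2 : m - p * q = (m - p * a) + p * (a - q) := by ring
  have e1 : |(1 - p) * (a - q) + (p * a - m)| ≤ (1 - p) * |a - q| + |m - p * a| := by
    calc |(1 - p) * (a - q) + (p * a - m)| ≤ |(1 - p) * (a - q)| + |p * a - m| := abs_add_le _ _
      _ = (1 - p) * |a - q| + |m - p * a| := by
          rw [abs_mul, abs_of_nonneg (by linarith : (0:ℝ) ≤ 1 - p), abs_sub_comm (p * a) m]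
  have e2 : |(m - p * a) + p * (a - q)| ≤ |m - p * a| + p * |a - q| := by
    calc |(m - p * a) + p * (a - q)| ≤ |m - p * a| + |p * (a - q)| := abs_add_le _ _
      _ = |m - p * a| + p * |a - q| := by rw [abs_mul, abs_of_nonneg hp0]
  rw [h1, h2]
  linarith

lemma csD_le_insert (hmX : ∀ t, Measurable (X t)) (h01 : ∀ t ω, X t ω = 0 ∨ X t ω = 1)
    {u v : I} {J : Finset I} (hv : v ∉ J) :
    csD μ X u J ≤ csD μ X u (insert v J) := by
  rw [csD, csD, Finset.sum_powerset_insert hv, ← Finset.sum_add_distrib]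
  refine Finset.sum_le_sum ?_
  intro T hT
  have hvT : v ∉ T := fun h => hv (Finset.mem_powerset.mp hT h)
  have hM : csM μ X u J T
      = csM μ X u (insert v J) (insert v T) + csM μ X u (insert v J) T :=
    csSplitS μ hmX h01 (measurableSet_one hmX u 1) hv hvT
  have hA : csA μ X J T
      = csA μ X (insert v J) (insert v T) + csA μ X (insert v J) T :=
    csSplitA μ hmX h01 hv hvT
  rw [hM, hA]
  have heq : csM μ X u (insert v J) (insert v T) + csM μ X u (insert v J) T
      - csP μ X u * (csA μ X (insert v J) (insert v T) + csA μ X (insert v J) T)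
      = (csM μ X u (insert v J) T - csP μ X u * csA μ X (insert v J) T)
        + (csM μ X u (insert v J) (insert v T)
            - csP μ X u * csA μ X (insert v J) (insert v T)) := by ring
  rw [heq]
  exact abs_add_le _ _

lemma csD_le_union (hmX : ∀ t, Measurable (X t)) (h01 : ∀ t ω, X t ω = 0 ∨ X t ω = 1)
    (u : I) (J V : Finset I) :
    csD μ X u J ≤ csD μ X u (J ∪ V) := by
  induction V using Finset.induction_on with
  | empty => simp
  | @insert v V hv ih =>
      rw [Finset.union_insert]
      by_cases hvJ : v ∈ J ∪ V
      · rwa [Finset.insert_eq_self.mpr hvJ]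
      · exact ih.trans (csD_le_insert μ hmX h01 hvJ)

lemma csD_insert_le (hmX : ∀ t, Measurable (X t)) (h01 : ∀ t ω, X t ω = 0 ∨ X t ω = 1)
    {u v : I} {J : Finset I} (hv : v ∉ J) :
    csD μ X u (insert v J) ≤ csD μ X u J
      + 2 * ((μ ({ω | X v ω = 1} ∩ {ω | X u ω = 1})).toReal + csP μ X u * csP μ X v) := by
  have hp0 : 0 ≤ csP μ X u := csP_nonneg μ u
  have key : ∀ T ∈ J.powerset,
      |csM μ X u (insert v J) T - csP μ X u * csA μ X (insert v J) T|
        + |csM μ X u (insert v J) (insert v T)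
            - csP μ X u * csA μ X (insert v J) (insert v T)|
      ≤ |csM μ X u J T - csP μ X u * csA μ X J T|
        + 2 * (csM μ X u (insert v J) (insert v T)
            + csP μ X u * csA μ X (insert v J) (insert v T)) := by
    intro T hT
    have hvT : v ∉ T := fun h => hv (Finset.mem_powerset.mp hT h)
    have hM : csM μ X u J T
        = csM μ X u (insert v J) (insert v T) + csM μ X u (insert v J) T :=
      csSplitS μ hmX h01 (measurableSet_one hmX u 1) hv hvT
    have hA : csA μ X J T
        = csA μ X (insert v J) (insert v T) + csA μ X (insert v J) T :=
      csSplitA μ hmX h01 hv hvT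
    have hM2 := csM_nonneg μ u (insert v J) (insert v T) (X := X)
    have hA2 := csA_nonneg μ (insert v J) (insert v T) (X := X)
    have h2 : |csM μ X u (insert v J) (insert v T)
        - csP μ X u * csA μ X (insert v J) (insert v T)|
        ≤ csM μ X u (insert v J) (insert v T)
          + csP μ X u * csA μ X (insert v J) (insert v T) :=
      abs_le.mpr ⟨by nlinarith, by nlinarith⟩
    have h1 : |csM μ X u (insert v J) T - csP μ X u * csA μ X (insert v J) T|
        ≤ |csM μ X u J T - csP μ X u * csA μ X J T|
          + (csM μ X u (insert v J) (insert v T)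
              + csP μ X u * csA μ X (insert v J) (insert v T)) := by
      have he : csM μ X u (insert v J) T - csP μ X u * csA μ X (insert v J) T
          = (csM μ X u J T - csP μ X u * csA μ X J T)
            - (csM μ X u (insert v J) (insert v T)
                - csP μ X u * csA μ X (insert v J) (insert v T)) := by
        rw [hM, hA]; ring
      rw [he]
      calc |(csM μ X u J T - csP μ X u * csA μ X J T)
            - (csM μ X u (insert v J) (insert v T)
                - csP μ X u * csA μ X (insert v J) (insert v T))|
          ≤ |csM μ X u J T - csP μ X u * csA μ X J T|
            + |csM μ X u (insert v J) (insert v T)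
                - csP μ X u * csA μ X (insert v J) (insert v T)| := abs_sub _ _
        _ ≤ _ := by linarith
    linarith
  have hSumM : ∑ T ∈ J.powerset, csM μ X u (insert v J) (insert v T)
      = (μ ({ω | X v ω = 1} ∩ {ω | X u ω = 1})).toReal := by
    have hEq : ∀ T ∈ J.powerset, csM μ X u (insert v J) (insert v T)
        = (μ (({ω | X v ω = 1} ∩ {ω | X u ω = 1}) ∩ csEv X J T)).toReal := by
      intro T hT
      rw [csM, csEv_insert_one hv, ← Set.inter_assoc,
        Set.inter_comm {ω | X u ω = 1} {ω | X v ω = 1}]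
    rw [Finset.sum_congr rfl hEq]
    exact csPartition μ hmX h01
      (((measurableSet_one hmX v 1).inter (measurableSet_one hmX u 1))) J
  have hSumA : ∑ T ∈ J.powerset, csA μ X (insert v J) (insert v T) = csP μ X v := by
    have hEq : ∀ T ∈ J.powerset, csA μ X (insert v J) (insert v T)
        = (μ ({ω | X v ω = 1} ∩ csEv X J T)).toReal := by
      intro T hT
      rw [csA, csEv_insert_one hv]
    rw [Finset.sum_congr rfl hEq]
    exact csPartition μ hmX h01 (measurableSet_one hmX v 1) J
  calc csD μ X u (insert v J)
      = ∑ T ∈ J.powerset,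
          (|csM μ X u (insert v J) T - csP μ X u * csA μ X (insert v J) T|
            + |csM μ X u (insert v J) (insert v T)
                - csP μ X u * csA μ X (insert v J) (insert v T)|) := by
        rw [csD, Finset.sum_powerset_insert hv, ← Finset.sum_add_distrib]
    _ ≤ ∑ T ∈ J.powerset,
          (|csM μ X u J T - csP μ X u * csA μ X J T|
            + 2 * (csM μ X u (insert v J) (insert v T)
                + csP μ X u * csA μ X (insert v J) (insert v T))) :=
        Finset.sum_le_sum key
    _ = csD μ X u J
        + 2 * ((μ ({ω | X v ω = 1} ∩ {ω | X u ω = 1})).toReal + csP μ X u * csP μ X v) := by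
        have hS : ∑ T ∈ J.powerset, 2 * (csM μ X u (insert v J) (insert v T)
              + csP μ X u * csA μ X (insert v J) (insert v T))
            = 2 * ((μ ({ω | X v ω = 1} ∩ {ω | X u ω = 1})).toReal
                + csP μ X u * csP μ X v) := by
          rw [← hSumM, ← hSumA, mul_add, Finset.mul_sum, Finset.mul_sum, Finset.mul_sum,
            ← Finset.sum_add_distrib]
          exact Finset.sum_congr rfl fun T _ => by ring
        rw [Finset.sum_add_distrib, hS, csD]

lemma csD_union_le (hmX : ∀ t, Measurable (X t)) (h01 : ∀ t ω, X t ω = 0 ∨ X t ω = 1)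
    (u : I) (N : Finset I) :
    ∀ J : Finset I, (∀ v ∈ N, v ∉ J) →
      csD μ X u (J ∪ N) ≤ csD μ X u J
        + 2 * ∑ v ∈ N,
            ((μ ({ω | X v ω = 1} ∩ {ω | X u ω = 1})).toReal + csP μ X u * csP μ X v) := by
  induction N using Finset.induction_on with
  | empty => intro J _; simp
  | @insert v N hvN ih =>
      intro J hdisj
      have hvJ : v ∉ J := hdisj v (Finset.mem_insert_self v N)
      have hvJN : v ∉ J ∪ N := by
        simp only [Finset.mem_union]
        rintro (h | h)
        exacts [hvJ h, hvN h]
      have step := csD_insert_le μ hmX h01 (u := u) hvJN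
      have ihJ := ih J (fun w hw => hdisj w (Finset.mem_insert_of_mem hw))
      rw [Finset.union_insert, Finset.sum_insert hvN]
      calc csD μ X u (insert v (J ∪ N))
          ≤ csD μ X u (J ∪ N)
            + 2 * ((μ ({ω | X v ω = 1} ∩ {ω | X u ω = 1})).toReal
                + csP μ X u * csP μ X v) := step
        _ ≤ _ := by linarith

lemma csMain (hmX : ∀ t, Measurable (X t)) (h01 : ∀ t ω, X t ω = 0 ∨ X t ω = 1)
    (J : Finset I) :
    ∑ T ∈ J.powerset,
        |csA μ X J T - ∏ s ∈ J, (if s ∈ T then csP μ X s else 1 - csP μ X s)|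
      ≤ ∑ u ∈ J, 2 * csD μ X u (Finset.univ.erase u) := by
  induction J using Finset.induction_on with
  | empty => simp [csA, csEv_empty]
  | @insert u J hu ih =>
      rw [Finset.sum_powerset_insert hu, Finset.sum_insert hu, ← Finset.sum_add_distrib]
      have key : ∀ T ∈ J.powerset,
          |csA μ X (insert u J) T
              - ∏ s ∈ insert u J, (if s ∈ T then csP μ X s else 1 - csP μ X s)|
            + |csA μ X (insert u J) (insert u T)
              - ∏ s ∈ insert u J, (if s ∈ insert u T then csP μ X s else 1 - csP μ X s)|
          ≤ 2 * |csM μ X u J T - csP μ X u * csA μ X J T|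
            + |csA μ X J T - ∏ s ∈ J, (if s ∈ T then csP μ X s else 1 - csP μ X s)| := by
        intro T hT
        have huT : u ∉ T := fun h => hu (Finset.mem_powerset.mp hT h)
        have hprod0 : ∏ s ∈ insert u J, (if s ∈ T then csP μ X s else 1 - csP μ X s)
            = (1 - csP μ X u) * ∏ s ∈ J, (if s ∈ T then csP μ X s else 1 - csP μ X s) := by
          rw [Finset.prod_insert hu, if_neg huT]
        have hprod1 : ∏ s ∈ insert u J,
              (if s ∈ insert u T then csP μ X s else 1 - csP μ X s)
            = csP μ X u * ∏ s ∈ J, (if s ∈ T then csP μ X s else 1 - csP μ X s) := by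
          rw [Finset.prod_insert hu, if_pos (Finset.mem_insert_self u T)]
          congr 1
          refine Finset.prod_congr rfl fun s hs => ?_
          have hsu : s ≠ u := fun h => hu (by rwa [h] at hs)
          simp [Finset.mem_insert, hsu]
        have hA1 : csA μ X (insert u J) (insert u T) = csM μ X u J T := csA_insert_one μ hu
        have hA0 : csA μ X (insert u J) T = csA μ X J T - csM μ X u J T := by
          have hsp := csSplitA μ hmX h01 hu huT
          rw [hA1] at hsp
          linarith
        rw [hprod0, hprod1, hA0, hA1]
        exact abs_pair_le (csP_nonneg μ u) (csP_le_one μ u)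
      calc ∑ T ∈ J.powerset,
            (|csA μ X (insert u J) T
                - ∏ s ∈ insert u J, (if s ∈ T then csP μ X s else 1 - csP μ X s)|
              + |csA μ X (insert u J) (insert u T)
                - ∏ s ∈ insert u J, (if s ∈ insert u T then csP μ X s else 1 - csP μ X s)|)
          ≤ ∑ T ∈ J.powerset,
              (2 * |csM μ X u J T - csP μ X u * csA μ X J T|
                + |csA μ X J T - ∏ s ∈ J, (if s ∈ T then csP μ X s else 1 - csP μ X s)|) :=
            Finset.sum_le_sum key
        _ = 2 * csD μ X u J
            + ∑ T ∈ J.powerset,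
                |csA μ X J T - ∏ s ∈ J, (if s ∈ T then csP μ X s else 1 - csP μ X s)| := by
            rw [Finset.sum_add_distrib, csD, Finset.mul_sum]
        _ ≤ 2 * csD μ X u (Finset.univ.erase u)
            + ∑ u' ∈ J, 2 * csD μ X u' (Finset.univ.erase u') := by
            have hsub : J ∪ Finset.univ.erase u = Finset.univ.erase u :=
              Finset.union_eq_right.mpr
                (fun s hs => Finset.mem_erase.mpr
                  ⟨fun h => hu (by rwa [h] at hs), Finset.mem_univ s⟩)
            have hmono := csD_le_union μ hmX h01 u J (Finset.univ.erase u)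
            rw [hsub] at hmono
            linarith

/-- σ-algebra generated by the coordinates in `O`. -/
def csSigma (X : I → Ωs → ℝ) (O : Finset I) : MeasurableSpace Ωs :=
  ⨆ s ∈ O, MeasurableSpace.comap (X s) inferInstance

lemma csSigma_le {X : I → Ωs → ℝ} (hmX : ∀ t, Measurable (X t)) (O : Finset I) :
    csSigma X O ≤ (inferInstance : MeasurableSpace Ωs) := by
  unfold csSigma
  exact iSup₂_le fun s _ => measurable_iff_comap_le.mp (hmX s)

lemma csD_le_condexp (hmX : ∀ t, Measurable (X t)) (h01 : ∀ t ω, X t ω = 0 ∨ X t ω = 1)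
    (u : I) (O : Finset I) :
    csD μ X u O
      ≤ ∫ ω, |condExp (csSigma X O) μ (fun ω' => X u ω' - csP μ X u) ω| ∂μ := by
  have hm_le : csSigma X O ≤ (inferInstance : MeasurableSpace Ωs) := csSigma_le hmX O
  have hEm : ∀ T ∈ O.powerset, MeasurableSet[csSigma X O] (csEv X O T) := by
    intro T _
    have h : csEv X O T = ⋂ s ∈ O, {ω | X s ω = csVal T s} := by ext ω; simp [csEv]
    rw [h]
    refine MeasurableSet.biInter (Set.to_countable _) fun s hs => ?_
    have hsM : MeasurableSet[MeasurableSpace.comap (X s) inferInstance]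
        {ω | X s ω = csVal T s} :=
      MeasurableSpace.measurableSet_comap.mpr
        ⟨{csVal T s}, measurableSet_singleton _, by ext ω; simp⟩
    have hle : MeasurableSpace.comap (X s) inferInstance ≤ csSigma X O := by
      unfold csSigma
      exact le_iSup₂ (f := fun s (_ : s ∈ O) => MeasurableSpace.comap (X s) inferInstance)
        s (Finset.mem_coe.mp hs)
    exact hle _ hsM
  haveI : SigmaFinite (μ.trim hm_le) := by infer_instance
  have hXind : X u = Set.indicator {ω | X u ω = 1} (fun _ => (1:ℝ)) := by
    funext ω
    rcases h01 u ω with h | h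
    · rw [h]; symm; simp [Set.indicator_apply, h]
    · rw [h]; symm; simp [Set.indicator_apply, h]
  have hIntX : Integrable (X u) μ := by
    rw [hXind]
    exact (integrable_indicator_iff (measurableSet_one hmX u 1)).mpr
      (integrableOn_const (measure_ne_top μ _))
  have hInt : Integrable (fun ω' => X u ω' - csP μ X u) μ :=
    hIntX.sub (integrable_const _)
  have hIntg : Integrable (condExp (csSigma X O) μ (fun ω' => X u ω' - csP μ X u)) μ := integrable_condExp
  have key : ∀ T ∈ O.powerset,
      |csM μ X u O T - csP μ X u * csA μ X O T|
        ≤ ∫ ω in csEv X O T, |condExp (csSigma X O) μ (fun ω' => X u ω' - csP μ X u) ω| ∂μ := by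
    intro T hT
    have hint1 : ∫ ω in csEv X O T, X u ω ∂μ = csM μ X u O T := by
      rw [hXind, setIntegral_indicator (measurableSet_one hmX u 1), setIntegral_const,
        smul_eq_mul, mul_one, csM, Set.inter_comm, measureReal_def]
    have hint2 : ∫ ω in csEv X O T, (X u ω - csP μ X u) ∂μ
        = csM μ X u O T - csP μ X u * csA μ X O T := by
      rw [integral_sub hIntX.integrableOn
          (integrableOn_const (measure_ne_top μ _)),
        hint1, setIntegral_const, smul_eq_mul, csA, measureReal_def]
      ring
    have hce := setIntegral_condExp hm_le hInt (hEm T hT)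
    rw [← hint2, ← hce]
    have hnorm := norm_integral_le_integral_norm
      (μ := μ.restrict (csEv X O T)) (condExp (csSigma X O) μ (fun ω' => X u ω' - csP μ X u))
    simpa [Real.norm_eq_abs] using hnorm
  have hUnion : ⋃ T ∈ O.powerset, csEv X O T = Set.univ := by
    ext ω
    simp only [Set.mem_iUnion, Set.mem_univ, iff_true]
    refine ⟨O.filter (fun s => X s ω = 1),
      Finset.mem_powerset.mpr (Finset.filter_subset _ _), fun s hs => ?_⟩
    rcases h01 s ω with h | h
    · rw [h, csVal, if_neg]
      intro hmem
      rw [(Finset.mem_filter.mp hmem).2] at h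
      norm_num at h
    · rw [h, csVal, if_pos (Finset.mem_filter.mpr ⟨hs, h⟩)]
  have hdisj : Set.Pairwise ↑O.powerset (Function.onFun Disjoint fun T => csEv X O T) := by
    intro T hT T' hT' hne
    rw [Function.onFun, Set.disjoint_left]
    intro ω h1 h2
    apply hne
    have hTs := Finset.mem_powerset.mp (Finset.mem_coe.mp hT)
    have hT's := Finset.mem_powerset.mp (Finset.mem_coe.mp hT')
    ext s
    by_cases hsO : s ∈ O
    · have e3 : csVal T s = csVal T' s := (h1 s hsO).symm.trans (h2 s hsO)
      by_cases h1m : s ∈ T <;> by_cases h2m : s ∈ T' <;>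
        simp [csVal, h1m, h2m] at e3 ⊢
    · constructor
      · intro h; exact absurd (hTs h) hsO
      · intro h; exact absurd (hT's h) hsO
  calc csD μ X u O
      ≤ ∑ T ∈ O.powerset,
          ∫ ω in csEv X O T, |condExp (csSigma X O) μ (fun ω' => X u ω' - csP μ X u) ω| ∂μ :=
        Finset.sum_le_sum key
    _ = ∫ ω in ⋃ T ∈ O.powerset, csEv X O T,
          |condExp (csSigma X O) μ (fun ω' => X u ω' - csP μ X u) ω| ∂μ :=
        (integral_biUnion_finset O.powerset (fun T _ => measurableSet_csEv hmX O T) hdisj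
          (fun T _ => hIntg.abs.integrableOn)).symm
    _ = ∫ ω, |condExp (csSigma X O) μ (fun ω' => X u ω' - csP μ X u) ω| ∂μ := by
        rw [hUnion, Measure.restrict_univ]

lemma csIndep_prod {X' : I → Ωs → ℝ} (hmX' : ∀ t, Measurable (X' t))
    (h01' : ∀ t ω, X' t ω = 0 ∨ X' t ω = 1)
    (hindep : iIndepFun X' μ) (T : Finset I) :
    (μ (csEv X' Finset.univ T)).toReal
      = ∏ s, (if s ∈ T then csP μ X' s else 1 - csP μ X' s) := by
  have hEv : csEv X' Finset.univ T
      = ⋂ s ∈ (Finset.univ : Finset I), X' s ⁻¹' {csVal T s} := by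
    ext ω; simp [csEv]
  have hmeas := (iIndepFun_iff_measure_inter_preimage_eq_mul.mp hindep) Finset.univ
    (sets := fun s => {csVal T s}) (fun s _ => measurableSet_singleton _)
  rw [hEv, hmeas, ENNReal.toReal_prod]
  refine Finset.prod_congr rfl fun s _ => ?_
  by_cases hs : s ∈ T
  · rw [if_pos hs]
    have he : X' s ⁻¹' {csVal T s} = {ω | X' s ω = 1} := by
      ext ω; simp [csVal, hs]
    rw [he, csP]
  · rw [if_neg hs]
    have h0 : X' s ⁻¹' {csVal T s} = {ω | X' s ω = 1}ᶜ := by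
      ext ω
      simp only [Set.mem_preimage, Set.mem_singleton_iff, Set.mem_compl_iff,
        Set.mem_setOf_eq, csVal, if_neg hs]
      constructor
      · intro h h1
        rw [h1] at h
        norm_num at h
      · intro h
        rcases h01' s ω with h' | h'
        · exact h'
        · exact absurd h' h
    rw [h0, measure_compl (measurableSet_one hmX' s 1) (measure_ne_top μ _), measure_univ,
      ENNReal.toReal_sub_of_le prob_le_one ENNReal.one_ne_top, ENNReal.toReal_one, csP]

lemma cs_tvDist_le {X X' : I → Ωs → ℝ} (hmX : ∀ t, Measurable (X t))
    (hmX' : ∀ t, Measurable (X' t)) (h01 : ∀ t ω, X t ω = 0 ∨ X t ω = 1)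
    (h01' : ∀ t ω, X' t ω = 0 ∨ X' t ω = 1) :
    tvDist (Measure.map (fun ω t => X t ω) μ) (Measure.map (fun ω t => X' t ω) μ)
      ≤ ∑ T ∈ (Finset.univ : Finset I).powerset,
          |(μ (csEv X Finset.univ T)).toReal - (μ (csEv X' Finset.univ T)).toReal| := by
  unfold tvDist
  refine ciSup_le ?_
  rintro ⟨E, hE⟩
  have key : ∀ (Y : I → Ωs → ℝ), (∀ t, Measurable (Y t)) →
      (∀ t ω, Y t ω = 0 ∨ Y t ω = 1) →
      (Measure.map (fun ω (t : I) => Y t ω) μ E).toReal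
        = ∑ T ∈ (Finset.univ : Finset I).powerset,
            (if csVal T ∈ E then (μ (csEv Y Finset.univ T)).toReal else 0) := by
    intro Y hmY h01Y
    have hmap : Measurable (fun ω (t : I) => Y t ω) := measurable_pi_iff.mpr hmY
    rw [Measure.map_apply hmap hE]
    have hSm : MeasurableSet ((fun ω (t : I) => Y t ω) ⁻¹' E) := hmap hE
    rw [← csPartition μ hmY h01Y hSm Finset.univ]
    refine Finset.sum_congr rfl fun T _ => ?_
    by_cases hT : csVal T ∈ E
    · rw [if_pos hT]
      have hsub : (fun ω (t : I) => Y t ω) ⁻¹' E ∩ csEv Y Finset.univ T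
          = csEv Y Finset.univ T := by
        apply Set.inter_eq_right.mpr
        intro ω hω
        have heq : (fun t => Y t ω) = csVal T := funext fun s => hω s (Finset.mem_univ s)
        show (fun t => Y t ω) ∈ E
        rw [heq]; exact hT
      rw [hsub]
    · rw [if_neg hT]
      have hempty : (fun ω (t : I) => Y t ω) ⁻¹' E ∩ csEv Y Finset.univ T = ∅ := by
        ext ω
        simp only [Set.mem_inter_iff, Set.mem_empty_iff_false, iff_false, not_and]
        intro hmem hω
        have heq : (fun t => Y t ω) = csVal T := funext fun s => hω s (Finset.mem_univ s)
        rw [Set.mem_preimage, heq] at hmem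
        exact hT hmem
      rw [hempty, measure_empty, ENNReal.toReal_zero]
  rw [key X hmX h01, key X' hmX' h01', ← Finset.sum_sub_distrib]
  refine (Finset.abs_sum_le_sum_abs _ _).trans (Finset.sum_le_sum fun T _ => ?_)
  by_cases hT : csVal T ∈ E
  · simp [hT]
  · simp only [if_neg hT, sub_zero, abs_zero]
    exact abs_nonneg _

end ChenSteinAux

/-- **Theorem (Statement 4, Chen–Stein method).** If `(X_t)_{t ∈ I}` and `(X'_t)_{t ∈ I}`
are `{0,1}`-valued processes with `X_t ~ X'_t` for each `t`, `(X'_t)` an independent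
Bernoulli process, and `B_t ∋ t` are neighbourhoods, then
`‖ℒ((X_t)) - ℒ((X'_t))‖_TV ≤ 8 (b₁ + b₂ + b₃)`. -/
theorem chen_stein
    {Ωs I : Type} [MeasurableSpace Ωs] [Fintype I]
    (μ : Measure Ωs) [IsProbabilityMeasure μ]
    (X X' : I → Ωs → ℝ)
    (hmX : ∀ t, Measurable (X t)) (hmX' : ∀ t, Measurable (X' t))
    (h01 : ∀ t ω, X t ω = 0 ∨ X t ω = 1) (h01' : ∀ t ω, X' t ω = 0 ∨ X' t ω = 1)
    (hlaw : ∀ t, Measure.map (X t) μ = Measure.map (X' t) μ)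
    (hindep : iIndepFun X' μ)
    (B : I → Finset I) (hB : ∀ t, t ∈ B t) :
    tvDist (Measure.map (fun ω t => X t ω) μ) (Measure.map (fun ω t => X' t ω) μ)
      ≤ 8 *
        ((∑ t, ∑ s ∈ B t, (μ {ω | X t ω = 1}).toReal * (μ {ω | X s ω = 1}).toReal)
          + (∑ t, ∑ s ∈ (B t).erase t,
              (μ ({ω | X s ω = 1} ∩ {ω | X t ω = 1})).toReal)
          + ∑ t, ∫ ω,
              |MeasureTheory.condExp
                  (⨆ s ∈ Finset.univ \ B t, MeasurableSpace.comap (X s) inferInstance) μ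
                  (fun ω' => X t ω' - (μ {ω'' | X t ω'' = 1}).toReal) ω| ∂μ) := by
  show tvDist (Measure.map (fun ω t => X t ω) μ) (Measure.map (fun ω t => X' t ω) μ)
      ≤ 8 *
        ((∑ t, ∑ s ∈ B t, csP μ X t * csP μ X s)
          + (∑ t, ∑ s ∈ (B t).erase t,
              (μ ({ω | X s ω = 1} ∩ {ω | X t ω = 1})).toReal)
          + ∑ t, ∫ ω,
              |condExp (csSigma X (Finset.univ \ B t)) μ
                  (fun ω' => X t ω' - csP μ X t) ω| ∂μ)
  have hps : ∀ s, csP μ X' s = csP μ X s := by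
    intro s
    rw [csP, csP]
    have e1 : {ω | X s ω = 1} = X s ⁻¹' {(1:ℝ)} := by ext ω; simp
    have e2 : {ω | X' s ω = 1} = X' s ⁻¹' {(1:ℝ)} := by ext ω; simp
    rw [e1, e2, ← Measure.map_apply (hmX s) (measurableSet_singleton 1),
      ← Measure.map_apply (hmX' s) (measurableSet_singleton 1), hlaw s]
  have hA := cs_tvDist_le μ hmX hmX' h01 h01'
  have hprod : ∀ T ∈ (Finset.univ : Finset I).powerset,
      |(μ (csEv X Finset.univ T)).toReal - (μ (csEv X' Finset.univ T)).toReal|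
        = |csA μ X Finset.univ T
            - ∏ s ∈ Finset.univ, (if s ∈ T then csP μ X s else 1 - csP μ X s)| := by
    intro T _
    rw [csIndep_prod μ hmX' h01' hindep T]
    have hpp : ∏ s, (if s ∈ T then csP μ X' s else 1 - csP μ X' s)
        = ∏ s ∈ Finset.univ, (if s ∈ T then csP μ X s else 1 - csP μ X s) :=
      Finset.prod_congr rfl fun s _ => by rw [hps s]
    rw [hpp]
    rfl
  rw [Finset.sum_congr rfl hprod] at hA
  have hmain := hA.trans (csMain μ hmX h01 Finset.univ)
  have hper : ∀ u : I,
      csD μ X u (Finset.univ.erase u)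
        ≤ (∫ ω, |condExp (csSigma X (Finset.univ \ B u)) μ
              (fun ω' => X u ω' - csP μ X u) ω| ∂μ)
          + 2 * ∑ v ∈ (B u).erase u,
              ((μ ({ω | X v ω = 1} ∩ {ω | X u ω = 1})).toReal
                + csP μ X u * csP μ X v) := by
    intro u
    have hJN : (Finset.univ \ B u) ∪ (B u).erase u = Finset.univ.erase u := by
      ext s
      constructor
      · intro h
        rcases Finset.mem_union.mp h with h | h
        · refine Finset.mem_erase.mpr ⟨?_, Finset.mem_univ s⟩
          intro heq
          exact (Finset.mem_sdiff.mp h).2 (by rw [heq]; exact hB u)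
        · exact Finset.mem_erase.mpr ⟨(Finset.mem_erase.mp h).1, Finset.mem_univ s⟩
      · intro h
        have hsu := (Finset.mem_erase.mp h).1
        by_cases hsB : s ∈ B u
        · exact Finset.mem_union_right _ (Finset.mem_erase.mpr ⟨hsu, hsB⟩)
        · exact Finset.mem_union_left _ (Finset.mem_sdiff.mpr ⟨Finset.mem_univ s, hsB⟩)
    have hdisj : ∀ v ∈ (B u).erase u, v ∉ Finset.univ \ B u := by
      intro v hv hmem
      exact (Finset.mem_sdiff.mp hmem).2 (Finset.mem_of_mem_erase hv)
    have h3 := csD_union_le μ hmX h01 u ((B u).erase u) (Finset.univ \ B u) hdisj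
    rw [hJN] at h3
    have h4 := csD_le_condexp μ hmX h01 u (Finset.univ \ B u)
    linarith
  have hsum : ∑ u : I, 2 * csD μ X u (Finset.univ.erase u)
      ≤ 2 * (∑ u : I, ∫ ω, |condExp (csSigma X (Finset.univ \ B u)) μ
              (fun ω' => X u ω' - csP μ X u) ω| ∂μ)
        + 4 * ∑ u : I, ∑ v ∈ (B u).erase u,
            ((μ ({ω | X v ω = 1} ∩ {ω | X u ω = 1})).toReal + csP μ X u * csP μ X v) := by
    calc ∑ u : I, 2 * csD μ X u (Finset.univ.erase u)
        ≤ ∑ u : I, (2 * (∫ ω, |condExp (csSigma X (Finset.univ \ B u)) μ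
              (fun ω' => X u ω' - csP μ X u) ω| ∂μ)
            + 4 * ∑ v ∈ (B u).erase u,
              ((μ ({ω | X v ω = 1} ∩ {ω | X u ω = 1})).toReal + csP μ X u * csP μ X v)) :=
          Finset.sum_le_sum fun u _ => by have := hper u; linarith
      _ = _ := by
          rw [Finset.sum_add_distrib, ← Finset.mul_sum, ← Finset.mul_sum]
  have hsplit : ∑ u : I, ∑ v ∈ (B u).erase u,
        ((μ ({ω | X v ω = 1} ∩ {ω | X u ω = 1})).toReal + csP μ X u * csP μ X v)
      = (∑ u : I, ∑ v ∈ (B u).erase u, (μ ({ω | X v ω = 1} ∩ {ω | X u ω = 1})).toReal)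
        + ∑ u : I, ∑ v ∈ (B u).erase u, csP μ X u * csP μ X v := by
    rw [← Finset.sum_add_distrib]
    exact Finset.sum_congr rfl fun u _ => Finset.sum_add_distrib
  have hS1 : ∑ u : I, ∑ v ∈ (B u).erase u, csP μ X u * csP μ X v
      ≤ ∑ u : I, ∑ v ∈ B u, csP μ X u * csP μ X v :=
    Finset.sum_le_sum fun u _ =>
      Finset.sum_le_sum_of_subset_of_nonneg (Finset.erase_subset u (B u))
        (fun v _ _ => mul_nonneg (csP_nonneg μ u) (csP_nonneg μ v))
  have hS1nn : (0:ℝ) ≤ ∑ u : I, ∑ v ∈ B u, csP μ X u * csP μ X v :=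
    Finset.sum_nonneg fun u _ => Finset.sum_nonneg fun v _ =>
      mul_nonneg (csP_nonneg μ u) (csP_nonneg μ v)
  have hS2nn : (0:ℝ) ≤ ∑ u : I, ∑ v ∈ (B u).erase u,
      (μ ({ω | X v ω = 1} ∩ {ω | X u ω = 1})).toReal :=
    Finset.sum_nonneg fun u _ => Finset.sum_nonneg fun v _ => ENNReal.toReal_nonneg
  have hS3nn : (0:ℝ) ≤ ∑ u : I, ∫ ω, |condExp (csSigma X (Finset.univ \ B u)) μ
      (fun ω' => X u ω' - csP μ X u) ω| ∂μ :=
    Finset.sum_nonneg fun u _ => integral_nonneg fun ω => abs_nonneg _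
  linarith

end PaperFormal
end
end

section
/- Let t > 0, let h be a centered Gaussian random variable with variance v² > 0 and let ξ be an independent centered Gaussian random variable with variance w² > 0. Then E| P(h ≥ t − ξ | ξ) − P(h ≥ t) | ≤ 2·exp(−t²/(2w²)) + (w/(v√(2π)))·exp(−t²/(2v²))·(E[exp(2t|ξ|/v²)])^{1/2}. -/
noncomputable section

namespace PaperFormal

open MeasureTheory ProbabilityTheory Filter Set
open scoped ENNReal NNReal Topology Classical


open Real

section GaussianShiftHelpers

private lemma vne {u : ℝ} (hu : 0 < u) : Real.toNNReal (u ^ 2) ≠ 0 := by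
  simp [Real.toNNReal_eq_zero, not_le, pow_pos hu, hu.ne']

private lemma vcoe {u : ℝ} (hu : 0 < u) : ((Real.toNNReal (u ^ 2) : ℝ≥0) : ℝ) = u ^ 2 :=
  Real.coe_toNNReal _ (sq_nonneg u)

private lemma gpdf_formula {u : ℝ} (hu : 0 < u) (x : ℝ) :
    gaussianPDFReal 0 (Real.toNNReal (u ^ 2)) x
      = (u * Real.sqrt (2 * π))⁻¹ * Real.exp (-x ^ 2 / (2 * u ^ 2)) := by
  rw [gaussianPDFReal]
  rw [vcoe hu]
  rw [show (2 : ℝ) * π * u ^ 2 = (2 * π) * u ^ 2 by ring, Real.sqrt_mul (by positivity),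
    Real.sqrt_sq hu.le, sub_zero, mul_comm (Real.sqrt (2 * π)) u]

private lemma integral_gm {u : ℝ} (hu : 0 < u) (g : ℝ → ℝ) :
    ∫ x, g x ∂(gaussianReal 0 (Real.toNNReal (u ^ 2)))
      = ∫ x, gaussianPDFReal 0 (Real.toNNReal (u ^ 2)) x * g x := by
  rw [gaussianReal_of_var_ne_zero _ (vne hu)]
  have : (gaussianPDF 0 (Real.toNNReal (u ^ 2)))
      = fun x => ((fun y => (gaussianPDFReal 0 (Real.toNNReal (u ^ 2)) y).toNNReal) x : ℝ≥0∞) :=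
    rfl
  rw [this, integral_withDensity_eq_integral_smul
    ((measurable_gaussianPDFReal _ _).real_toNNReal) g]
  refine integral_congr_ae (ae_of_all _ fun x => ?_)
  simp [NNReal.smul_def, Real.coe_toNNReal _ (gaussianPDFReal_nonneg _ _ x)]

private lemma integrable_gm_iff {u : ℝ} (hu : 0 < u) {g : ℝ → ℝ} :
    Integrable g (gaussianReal 0 (Real.toNNReal (u ^ 2)))
      ↔ Integrable (fun x => g x * gaussianPDFReal 0 (Real.toNNReal (u ^ 2)) x) volume := by
  rw [gaussianReal_of_var_ne_zero _ (vne hu)]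
  rw [integrable_withDensity_iff (measurable_gaussianPDF _ _)
    (ae_of_all _ fun x => ENNReal.ofReal_lt_top)]
  refine integrable_congr (ae_of_all _ fun x => ?_)
  simp [gaussianPDF, ENNReal.toReal_ofReal (gaussianPDFReal_nonneg _ _ x)]

private lemma integrable_exp_abs_gm {u : ℝ} (hu : 0 < u) (c : ℝ) :
    Integrable (fun x => Real.exp (c * |x|)) (gaussianReal 0 (Real.toNNReal (u ^ 2))) := by
  rw [integrable_gm_iff hu]
  set β : ℝ := (2 * u ^ 2)⁻¹ with hβ
  have hβ0 : 0 < β := by positivity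
  have hmeas : AEStronglyMeasurable
      (fun x => Real.exp (c * |x|) * gaussianPDFReal 0 (Real.toNNReal (u ^ 2)) x) volume :=
    ((measurable_abs.const_mul c).exp.mul (measurable_gaussianPDFReal _ _)).aestronglyMeasurable
  refine Integrable.mono'
    (g := fun x => ((u * Real.sqrt (2 * π))⁻¹ * Real.exp (c ^ 2 / (2 * β)))
        * Real.exp (-(β / 2) * x ^ 2))
    ((integrable_exp_neg_mul_sq (by positivity)).const_mul _) hmeas
    (ae_of_all _ fun x => ?_)
  rw [Real.norm_eq_abs,
    abs_of_nonneg (mul_nonneg (Real.exp_nonneg _) (gaussianPDFReal_nonneg _ _ _))]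
  rw [gpdf_formula hu]
  show _ ≤ (u * Real.sqrt (2 * π))⁻¹ * Real.exp (c ^ 2 / (2 * β)) * Real.exp (-(β / 2) * x ^ 2)
  have h1 : Real.exp (c * |x|) * ((u * Real.sqrt (2 * π))⁻¹ * Real.exp (-x ^ 2 / (2 * u ^ 2)))
      = (u * Real.sqrt (2 * π))⁻¹ * Real.exp (c * |x| + -(β * x ^ 2)) := by
    rw [Real.exp_add]
    rw [show -(β * x ^ 2) = -x ^ 2 / (2 * u ^ 2) by rw [hβ]; field_simp]
    ring
  rw [h1, mul_assoc, ← Real.exp_add]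
  refine mul_le_mul_of_nonneg_left (Real.exp_le_exp.2 ?_) (by positivity)
  have h2 : (0:ℝ) < 2 * β := by positivity
  have key : 2 * β * (c * |x|) ≤ β ^ 2 * x ^ 2 + c ^ 2 := by
    nlinarith [sq_nonneg (β * |x| - c), sq_abs x]
  have hx : c * |x| ≤ β / 2 * x ^ 2 + c ^ 2 / (2 * β) := by
    calc c * |x| = 2 * β * (c * |x|) / (2 * β) := by field_simp
      _ ≤ (β ^ 2 * x ^ 2 + c ^ 2) / (2 * β) := by gcongr

      _ = β / 2 * x ^ 2 + c ^ 2 / (2 * β) := by field_simp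
  linarith [hx]

private lemma integrable_abs_exp_gm {u : ℝ} (hu : 0 < u) (c : ℝ) :
    Integrable (fun x => |x| * Real.exp (c * |x|))
      (gaussianReal 0 (Real.toNNReal (u ^ 2))) := by
  refine Integrable.mono' (integrable_exp_abs_gm hu (c + 1))
    ((measurable_abs.mul (measurable_abs.const_mul c).exp).aestronglyMeasurable)
    (ae_of_all _ fun x => ?_)
  rw [Real.norm_eq_abs, abs_of_nonneg (by positivity)]
  have h1 : |x| ≤ Real.exp |x| :=
    (le_add_of_nonneg_right zero_le_one).trans (Real.add_one_le_exp _)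
  calc |x| * Real.exp (c * |x|) ≤ Real.exp |x| * Real.exp (c * |x|) :=
        mul_le_mul_of_nonneg_right h1 (Real.exp_nonneg _)
    _ = Real.exp ((c + 1) * |x|) := by rw [← Real.exp_add]; ring_nf

private lemma integrable_sq_gm {u : ℝ} (hu : 0 < u) :
    Integrable (fun x : ℝ => x ^ 2) (gaussianReal 0 (Real.toNNReal (u ^ 2))) := by
  refine Integrable.mono' (integrable_exp_abs_gm hu 2)
    ((measurable_id.pow_const 2).aestronglyMeasurable) (ae_of_all _ fun x => ?_)
  rw [Real.norm_eq_abs, abs_of_nonneg (sq_nonneg x)]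
  have h1 : |x| ≤ Real.exp |x| :=
    (le_add_of_nonneg_right zero_le_one).trans (Real.add_one_le_exp _)
  calc x ^ 2 = |x| * |x| := by rw [← abs_mul, ← sq, abs_of_nonneg (sq_nonneg x)]
    _ ≤ Real.exp |x| * Real.exp |x| :=
        mul_le_mul h1 h1 (abs_nonneg x) (Real.exp_nonneg _)
    _ = Real.exp (2 * |x|) := by rw [← Real.exp_add]; ring_nf

private lemma integrable_sq_exp (b : ℝ) (hb : 0 < b) :
    Integrable (fun x : ℝ => x ^ 2 * Real.exp (-b * x ^ 2)) := by
  have := integrable_rpow_mul_exp_neg_mul_sq hb (s := 2) (by norm_num)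
  refine this.congr (ae_of_all _ fun x => ?_)
  norm_num [show ((2:ℝ)) = ((2:ℕ):ℝ) from by norm_num, Real.rpow_natCast]

private lemma tendsto_mul_exp_zero {b : ℝ} (hb : 0 < b) :
    Tendsto (fun x : ℝ => x * Real.exp (-b * x ^ 2)) atTop (𝓝 0) := by
  have h := tendsto_rpow_abs_mul_exp_neg_mul_sq_cocompact hb 1
  have h2 : Tendsto (fun x : ℝ => |x| ^ (1 : ℝ) * Real.exp (-b * x ^ 2)) atTop (𝓝 0) :=
    h.mono_left (by rw [cocompact_eq_atBot_atTop]; exact le_sup_right)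
  refine h2.congr' ?_
  filter_upwards [eventually_ge_atTop (0 : ℝ)] with x hx
  rw [Real.rpow_one, abs_of_nonneg hx]

private lemma integral_sq_exp_Ioi {b : ℝ} (hb : 0 < b) :
    ∫ x in Ioi (0:ℝ), x ^ 2 * Real.exp (-b * x ^ 2)
      = Real.sqrt (π / b) / (4 * b) := by
  set F : ℝ → ℝ := fun x => -(2 * b)⁻¹ * (x * Real.exp (-b * x ^ 2)) with hF
  have hderiv : ∀ x ∈ Ioi (0:ℝ), HasDerivAt F
      (x ^ 2 * Real.exp (-b * x ^ 2) - (2 * b)⁻¹ * Real.exp (-b * x ^ 2)) x := by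
    intro x _
    have h1 : HasDerivAt (fun y : ℝ => -b * y ^ 2) (-b * (2 * x)) x := by
      simpa using ((hasDerivAt_pow 2 x).const_mul (-b))
    have h2 : HasDerivAt (fun y : ℝ => Real.exp (-b * y ^ 2))
        (Real.exp (-b * x ^ 2) * (-b * (2 * x))) x := h1.exp
    have h3 : HasDerivAt (fun y : ℝ => y * Real.exp (-b * y ^ 2))
        (1 * Real.exp (-b * x ^ 2) + x * (Real.exp (-b * x ^ 2) * (-b * (2 * x)))) x :=
      (hasDerivAt_id x).mul h2
    have h4 := h3.const_mul (-(2 * b)⁻¹)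
    have hinv : (2 * b)⁻¹ * (2 * b) = 1 := inv_mul_cancel₀ (by positivity)
    exact h4.congr_deriv (by linear_combination (x ^ 2 * Real.exp (-b * x ^ 2)) * hinv)
  have hcont : ContinuousWithinAt F (Ici 0) 0 := by
    have : Continuous F := by fun_prop
    exact this.continuousWithinAt
  have hint : IntegrableOn (fun x => x ^ 2 * Real.exp (-b * x ^ 2)
      - (2 * b)⁻¹ * Real.exp (-b * x ^ 2)) (Ioi 0) := by
    exact ((integrable_sq_exp b hb).sub
      ((integrable_exp_neg_mul_sq hb).const_mul _)).integrableOn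
  have htend : Tendsto F atTop (𝓝 0) := by
    have h := (tendsto_mul_exp_zero hb).const_mul (-(2 * b)⁻¹)
    rw [mul_zero] at h
    exact h
  have key := integral_Ioi_of_hasDerivAt_of_tendsto hcont hderiv hint htend
  have hF0 : F 0 = 0 := by simp [hF]
  rw [hF0, sub_zero] at key
  have hsub : ∫ x in Ioi (0:ℝ), (x ^ 2 * Real.exp (-b * x ^ 2)
      - (2 * b)⁻¹ * Real.exp (-b * x ^ 2))
      = (∫ x in Ioi (0:ℝ), x ^ 2 * Real.exp (-b * x ^ 2))
        - (2 * b)⁻¹ * ∫ x in Ioi (0:ℝ), Real.exp (-b * x ^ 2) := by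
    rw [integral_sub ((integrable_sq_exp b hb).integrableOn)
      (((integrable_exp_neg_mul_sq hb).const_mul _).integrableOn), integral_const_mul]
  rw [hsub] at key
  rw [integral_gaussian_Ioi b] at key
  have : (∫ x in Ioi (0:ℝ), x ^ 2 * Real.exp (-b * x ^ 2))
      = (2 * b)⁻¹ * (Real.sqrt (π / b) / 2) := by linarith
  rw [this]
  generalize Real.sqrt (π / b) = s
  field_simp
  ring

private lemma integral_sq_exp_real {b : ℝ} (hb : 0 < b) :
    ∫ x : ℝ, x ^ 2 * Real.exp (-b * x ^ 2) = Real.sqrt (π / b) / (2 * b) := by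
  have h := integral_comp_abs (f := fun y : ℝ => y ^ 2 * Real.exp (-b * y ^ 2))
  have h2 : (fun x : ℝ => |x| ^ 2 * Real.exp (-b * |x| ^ 2))
      = fun x : ℝ => x ^ 2 * Real.exp (-b * x ^ 2) := by
    funext x; rw [sq_abs]
  rw [h2] at h
  rw [h, integral_sq_exp_Ioi hb]
  generalize Real.sqrt (π / b) = s
  field_simp
  ring

private lemma integral_sq_gm {u : ℝ} (hu : 0 < u) :
    ∫ x, x ^ 2 ∂(gaussianReal 0 (Real.toNNReal (u ^ 2))) = u ^ 2 := by
  rw [integral_gm hu]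
  have hβ : (0:ℝ) < (2 * u ^ 2)⁻¹ := by positivity
  have h1 : (fun x : ℝ => gaussianPDFReal 0 (Real.toNNReal (u ^ 2)) x * x ^ 2)
      = fun x : ℝ => (u * Real.sqrt (2 * π))⁻¹ * (x ^ 2 * Real.exp (-(2 * u ^ 2)⁻¹ * x ^ 2)) := by
    funext x
    rw [gpdf_formula hu]
    rw [show -(2 * u ^ 2)⁻¹ * x ^ 2 = -x ^ 2 / (2 * u ^ 2) by field_simp]
    ring
  rw [h1, integral_const_mul, integral_sq_exp_real hβ]
  have h2 : π / (2 * u ^ 2)⁻¹ = 2 * π * u ^ 2 := by field_simp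
  rw [h2]
  have h3 : Real.sqrt (2 * π * u ^ 2) = Real.sqrt (2 * π) * u := by
    rw [Real.sqrt_mul (by positivity), Real.sqrt_sq hu.le]
  rw [h3]
  have h4 : Real.sqrt (2 * π) > 0 := Real.sqrt_pos.2 (by positivity)
  have h4' : Real.sqrt (2 * π) ≠ 0 := ne_of_gt h4
  generalize hs : Real.sqrt (2 * π) = s at h4' ⊢
  field_simp

private lemma tail_gm {u t : ℝ} (hu : 0 < u) (ht : 0 < t) :
    ((gaussianReal 0 (Real.toNNReal (u ^ 2))) {x | t ≤ |x|}).toReal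
      ≤ 2 * Real.exp (-t ^ 2 / (2 * u ^ 2)) := by
  set U := Real.toNNReal (u ^ 2) with hU
  set S : Set ℝ := {x | t ≤ |x|} with hS
  have hSmeas : MeasurableSet S := measurableSet_le measurable_const measurable_abs
  set E : ℝ := Real.exp (-t ^ 2 / (2 * u ^ 2)) with hE
  have hE0 : (0:ℝ) ≤ E := Real.exp_nonneg _
  set g : ℝ → ℝ := fun x => E * (gaussianPDFReal t U x + gaussianPDFReal (-t) U x) with hg
  have hgint : Integrable g :=
    ((integrable_gaussianPDFReal t U).add (integrable_gaussianPDFReal (-t) U)).const_mul E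
  have hgnonneg : ∀ x, 0 ≤ g x := fun x =>
    mul_nonneg hE0 (add_nonneg (gaussianPDFReal_nonneg _ _ _) (gaussianPDFReal_nonneg _ _ _))
  have key : ∀ m x' : ℝ, gaussianPDFReal m U x'
      = (Real.sqrt (2 * π * u ^ 2))⁻¹ * Real.exp (-(x' - m) ^ 2 / (2 * u ^ 2)) := by
    intro m x'
    rw [gaussianPDFReal, hU, vcoe hu]
  have hK : (0:ℝ) ≤ (Real.sqrt (2 * π * u ^ 2))⁻¹ := by positivity
  have hpt : ∀ x ∈ S, gaussianPDFReal 0 U x ≤ g x := by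
    intro x hx
    have habs : t ≤ |x| := hx
    have h2u : (0:ℝ) < 2 * u ^ 2 := by positivity
    rcases le_abs.mp habs with h1 | h1
    · have hexp : -(x - 0) ^ 2 / (2 * u ^ 2)
          ≤ -t ^ 2 / (2 * u ^ 2) + -(x - t) ^ 2 / (2 * u ^ 2) := by
        rw [← add_div]
        exact (div_le_div_iff_of_pos_right h2u).mpr (by nlinarith [mul_nonneg ht.le (sub_nonneg.mpr h1)])
      calc gaussianPDFReal 0 U x
          = (Real.sqrt (2 * π * u ^ 2))⁻¹ * Real.exp (-(x - 0) ^ 2 / (2 * u ^ 2)) := key 0 x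
        _ ≤ (Real.sqrt (2 * π * u ^ 2))⁻¹
            * Real.exp (-t ^ 2 / (2 * u ^ 2) + -(x - t) ^ 2 / (2 * u ^ 2)) :=
            mul_le_mul_of_nonneg_left (Real.exp_le_exp.2 hexp) hK
        _ = E * ((Real.sqrt (2 * π * u ^ 2))⁻¹ * Real.exp (-(x - t) ^ 2 / (2 * u ^ 2))) := by
            rw [Real.exp_add]; ring
        _ = E * gaussianPDFReal t U x := by rw [key t x]
        _ ≤ g x := mul_le_mul_of_nonneg_left
            (le_add_of_nonneg_right (gaussianPDFReal_nonneg _ _ _)) hE0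
    · have hexp : -(x - 0) ^ 2 / (2 * u ^ 2)
          ≤ -t ^ 2 / (2 * u ^ 2) + -(x - -t) ^ 2 / (2 * u ^ 2) := by
        rw [← add_div]
        exact (div_le_div_iff_of_pos_right h2u).mpr (by nlinarith [mul_nonneg ht.le (sub_nonneg.mpr h1)])
      calc gaussianPDFReal 0 U x
          = (Real.sqrt (2 * π * u ^ 2))⁻¹ * Real.exp (-(x - 0) ^ 2 / (2 * u ^ 2)) := key 0 x
        _ ≤ (Real.sqrt (2 * π * u ^ 2))⁻¹
            * Real.exp (-t ^ 2 / (2 * u ^ 2) + -(x - -t) ^ 2 / (2 * u ^ 2)) :=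
            mul_le_mul_of_nonneg_left (Real.exp_le_exp.2 hexp) hK
        _ = E * ((Real.sqrt (2 * π * u ^ 2))⁻¹ * Real.exp (-(x - -t) ^ 2 / (2 * u ^ 2))) := by
            rw [Real.exp_add]; ring
        _ = E * gaussianPDFReal (-t) U x := by rw [key (-t) x]
        _ ≤ g x := mul_le_mul_of_nonneg_left
            (le_add_of_nonneg_left (gaussianPDFReal_nonneg _ _ _)) hE0
  rw [gaussianReal_apply_eq_integral 0 (vne hu) S,
    ENNReal.toReal_ofReal (setIntegral_nonneg hSmeas fun x _ => gaussianPDFReal_nonneg _ _ _)]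
  calc ∫ x in S, gaussianPDFReal 0 U x
      ≤ ∫ x in S, g x := setIntegral_mono_on
        ((integrable_gaussianPDFReal 0 U).integrableOn) hgint.integrableOn hSmeas hpt
    _ ≤ ∫ x, g x := setIntegral_le_integral hgint (ae_of_all _ hgnonneg)
    _ = E * (1 + 1) := by
        rw [hg]
        rw [integral_const_mul,
          integral_add (integrable_gaussianPDFReal _ _) (integrable_gaussianPDFReal _ _),
          integral_gaussianPDFReal_eq_one _ (vne hu), integral_gaussianPDFReal_eq_one _ (vne hu)]
    _ = 2 * E := by ring

private lemma Fdiff_le {u a b M : ℝ} (hu : 0 < u) (hab : a ≤ b)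
    (hM : ∀ x ∈ Ico a b, gaussianPDFReal 0 (Real.toNNReal (u ^ 2)) x ≤ M) :
    ((gaussianReal 0 (Real.toNNReal (u ^ 2))) (Ici a)).toReal
      - ((gaussianReal 0 (Real.toNNReal (u ^ 2))) (Ici b)).toReal ≤ (b - a) * M := by
  set μ := gaussianReal 0 (Real.toNNReal (u ^ 2)) with hμ
  have hdisj : Disjoint (Ico a b) (Ici b) :=
    Set.disjoint_left.mpr fun x hx hx' => absurd hx.2 (not_lt.mpr hx')
  have hsplit : μ (Ici a) = μ (Ico a b) + μ (Ici b) := by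
    rw [← measure_union hdisj measurableSet_Ici, Ico_union_Ici_eq_Ici hab]
  have hfin : ∀ s : Set ℝ, μ s ≠ ⊤ := fun s => measure_ne_top μ s
  have hdiff : (μ (Ici a)).toReal - (μ (Ici b)).toReal = (μ (Ico a b)).toReal := by
    rw [hsplit, ENNReal.toReal_add (hfin _) (hfin _)]
    ring
  rw [hdiff]
  rw [hμ, gaussianReal_apply_eq_integral 0 (vne hu) (Ico a b),
    ENNReal.toReal_ofReal
      (setIntegral_nonneg measurableSet_Ico fun x _ => gaussianPDFReal_nonneg _ _ _)]
  calc ∫ x in Ico a b, gaussianPDFReal 0 (Real.toNNReal (u ^ 2)) x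
      ≤ ∫ _x in Ico a b, M := by
        refine setIntegral_mono_on ((integrable_gaussianPDFReal _ _).integrableOn)
          (integrableOn_const measure_Ico_lt_top.ne) measurableSet_Ico hM
    _ = (b - a) * M := by
        rw [setIntegral_const, Real.volume_real_Ico_of_le hab,
          smul_eq_mul]

end GaussianShiftHelpers

/-- **Theorem (Statement 16).** If `h ~ N(0, v²)` and `ξ ~ N(0, w²)` are independent and
`t > 0`, then `E|P(h ≥ t - ξ | ξ) - P(h ≥ t)|
  ≤ 2 exp(-t²/(2w²)) + (w/(v √(2π))) exp(-t²/(2v²)) (E[exp(2t|ξ|/v²)])^{1/2}`. -/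
theorem gaussian_shift_estimate
    {Ωs : Type} [MeasurableSpace Ωs] (P : Measure Ωs) [IsProbabilityMeasure P]
    (t v w : ℝ) (ht : 0 < t) (hv : 0 < v) (hw : 0 < w)
    (h ξ : Ωs → ℝ) (hmh : Measurable h) (hmξ : Measurable ξ)
    (hlawh : Measure.map h P = gaussianReal 0 (Real.toNNReal (v ^ 2)))
    (hlawξ : Measure.map ξ P = gaussianReal 0 (Real.toNNReal (w ^ 2)))
    (hindep : IndepFun h ξ P) :
    (∫ ω, |(P {ω' | t - ξ ω ≤ h ω'}).toReal - (P {ω' | t ≤ h ω'}).toReal| ∂P)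
      ≤ 2 * Real.exp (-t ^ 2 / (2 * w ^ 2))
        + w / (v * Real.sqrt (2 * Real.pi)) * Real.exp (-t ^ 2 / (2 * v ^ 2))
          * (∫ ω, Real.exp (2 * t * |ξ ω| / v ^ 2) ∂P) ^ ((1 : ℝ) / 2) := by
  have hπ : (0:ℝ) < Real.sqrt (2 * π) := Real.sqrt_pos.2 (by positivity)
  set μv := gaussianReal 0 (Real.toNNReal (v ^ 2)) with hμv
  set μw := gaussianReal 0 (Real.toNNReal (w ^ 2)) with hμw
  haveI hμvP : IsProbabilityMeasure μv := by rw [hμv]; infer_instance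
  haveI hμwP : IsProbabilityMeasure μw := by rw [hμw]; infer_instance
  set F : ℝ → ℝ := fun a => (μv (Ici a)).toReal with hF
  have hFanti : Antitone F := fun a b hab =>
    ENNReal.toReal_mono (measure_ne_top _ _) (measure_mono (Ici_subset_Ici.mpr hab))
  have hFmeas : Measurable F := hFanti.measurable
  have hF0 : ∀ a, 0 ≤ F a := fun a => ENNReal.toReal_nonneg
  have hF1 : ∀ a, F a ≤ 1 := fun a => by
    simpa using ENNReal.toReal_mono (by simp : (1:ℝ≥0∞) ≠ ⊤) (prob_le_one (μ := μv))
  have hP : ∀ a : ℝ, (P {ω' | a ≤ h ω'}).toReal = F a := by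
    intro a
    have e1 : {ω' | a ≤ h ω'} = h ⁻¹' (Ici a) := rfl
    rw [e1, ← Measure.map_apply hmh measurableSet_Ici, hlawh]
  set G : ℝ → ℝ := fun s => |F (t - s) - F t| with hG
  have hGmeas : Measurable G :=
    ((hFmeas.comp (measurable_const.sub measurable_id)).sub measurable_const).abs
  set c : ℝ := t / v ^ 2 with hc
  set Cv : ℝ := (v * Real.sqrt (2 * π))⁻¹ * Real.exp (-t ^ 2 / (2 * v ^ 2)) with hCv
  have hCv0 : 0 ≤ Cv := by rw [hCv]; positivity
  set S : Set ℝ := {s | t ≤ |s|} with hS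
  have hSmeas : MeasurableSet S := measurableSet_le measurable_const measurable_abs
  set bound : ℝ → ℝ :=
    fun s => S.indicator (fun _ => (1:ℝ)) s + Cv * (|s| * Real.exp (c * |s|)) with hbound
  -- pointwise bound
  have hpt : ∀ s, G s ≤ bound s := by
    intro s
    have hbs : bound s = S.indicator (fun _ => (1:ℝ)) s + Cv * (|s| * Real.exp (c * |s|)) := rfl
    by_cases hcase : t ≤ |s|
    · have hind : S.indicator (fun _ => (1:ℝ)) s = 1 := Set.indicator_of_mem (show s ∈ S from hcase) (fun _ => (1:ℝ))
      have hGle : G s ≤ 1 := by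
        have h1 := hF0 (t - s); have h2 := hF1 (t - s); have h3 := hF0 t; have h4 := hF1 t
        have : G s = |F (t - s) - F t| := rfl
        rw [this]
        rw [abs_le]
        constructor <;> linarith
      have hpos : 0 ≤ Cv * (|s| * Real.exp (c * |s|)) :=
        mul_nonneg hCv0 (mul_nonneg (abs_nonneg _) (Real.exp_nonneg _))
      rw [hbs, hind]
      linarith
    · push_neg at hcase
      have hind : S.indicator (fun _ => (1:ℝ)) s = 0 :=
        Set.indicator_of_notMem (show s ∉ S from not_le.mpr hcase) (fun _ => (1:ℝ))
      set M : ℝ := (v * Real.sqrt (2 * π))⁻¹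
        * Real.exp ((-t ^ 2 + 2 * t * |s|) / (2 * v ^ 2)) with hM
      have hMeq : |s| * M = Cv * (|s| * Real.exp (c * |s|)) := by
        rw [hM, hCv, hc]
        rw [show (-t ^ 2 + 2 * t * |s|) / (2 * v ^ 2)
            = -t ^ 2 / (2 * v ^ 2) + t / v ^ 2 * |s| by field_simp]
        rw [Real.exp_add]
        ring
      have hMb : ∀ lo : ℝ, t - |s| ≤ lo → ∀ hi : ℝ, ∀ x ∈ Ico lo hi,
          gaussianPDFReal 0 (Real.toNNReal (v ^ 2)) x ≤ M := by
        intro lo hlo hi x hx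
        have hx1 : t - |s| ≤ x := hlo.trans hx.1
        have hxpos : 0 ≤ x := by linarith [hcase.le]
        have hsq : -x ^ 2 ≤ -t ^ 2 + 2 * t * |s| := by nlinarith [abs_nonneg s]
        rw [gpdf_formula hv x, hM]
        refine mul_le_mul_of_nonneg_left (Real.exp_le_exp.2 ?_) (by positivity)
        exact (div_le_div_iff_of_pos_right (by positivity)).mpr hsq
      by_cases hs : 0 ≤ s
      · have hab : t - s ≤ t := sub_le_self t hs
        have habs : G s = F (t - s) - F t :=
          abs_of_nonneg (sub_nonneg.mpr (hFanti hab))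
        have hkey : F (t - s) - F t ≤ (t - (t - s)) * M :=
          Fdiff_le hv hab (hMb (t - s) (by rw [abs_of_nonneg hs]) t)
        have heq2 : (t - (t - s)) * M = |s| * M := by rw [abs_of_nonneg hs]; ring
        rw [habs, hbs, hind]
        linarith [hMeq, hkey, heq2]
      · push_neg at hs
        have hab : t ≤ t - s := by linarith
        have habs : G s = F t - F (t - s) := by
          have : G s = |F (t - s) - F t| := rfl
          rw [this, abs_sub_comm]
          exact abs_of_nonneg (sub_nonneg.mpr (hFanti hab))
        have hkey : F t - F (t - s) ≤ ((t - s) - t) * M :=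
          Fdiff_le hv hab (hMb t (sub_le_self t (abs_nonneg s)) (t - s))
        have heq2 : ((t - s) - t) * M = |s| * M := by rw [abs_of_neg hs]; ring
        rw [habs, hbs, hind]
        linarith [hMeq, hkey, heq2]
  -- integrability
  have hIind : Integrable (S.indicator fun _ => (1:ℝ)) μw :=
    (integrable_const 1).indicator hSmeas
  have hIae : Integrable (fun s => |s| * Real.exp (c * |s|)) μw := by
    rw [hμw]; exact integrable_abs_exp_gm hw c
  have hIbound : Integrable bound μw := hIind.add (hIae.const_mul Cv)
  -- reduce LHS to an integral over μw
  have h1 : ∀ ω, |(P {ω' | t - ξ ω ≤ h ω'}).toReal - (P {ω' | t ≤ h ω'}).toReal| = G (ξ ω) :=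
    fun ω => by rw [hP (t - ξ ω), hP t]
  have hstep0 : (∫ ω, |(P {ω' | t - ξ ω ≤ h ω'}).toReal - (P {ω' | t ≤ h ω'}).toReal| ∂P)
      = ∫ s, G s ∂μw := by
    calc (∫ ω, |(P {ω' | t - ξ ω ≤ h ω'}).toReal - (P {ω' | t ≤ h ω'}).toReal| ∂P)
        = ∫ ω, G (ξ ω) ∂P := integral_congr_ae (ae_of_all _ h1)
      _ = ∫ s, G s ∂μw := by
          rw [← hlawξ]
          exact (integral_map hmξ.aemeasurable hGmeas.aestronglyMeasurable).symm
  -- Cauchy-Schwarz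
  set X : ℝ := ∫ ω, Real.exp (2 * t * |ξ ω| / v ^ 2) ∂P with hX
  have hXeq : ∫ s, Real.exp (c * |s|) ^ (2:ℝ) ∂μw = X := by
    have h2 : ∀ s : ℝ, Real.exp (c * |s|) ^ (2:ℝ) = Real.exp (2 * t * |s| / v ^ 2) := by
      intro s
      rw [show (2:ℝ) = ((2:ℕ):ℝ) by norm_num, Real.rpow_natCast]
      rw [pow_two, ← Real.exp_add, hc]
      congr 1
      field_simp
      ring
    rw [integral_congr_ae (ae_of_all _ h2), hX, ← hlawξ]
    exact integral_map hmξ.aemeasurable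
      ((((measurable_abs.const_mul (2 * t)).div_const (v ^ 2)).exp).aestronglyMeasurable)
  have hXf : ∫ s, (|s|:ℝ) ^ (2:ℝ) ∂μw = w ^ 2 := by
    have h2 : ∀ s : ℝ, (|s|:ℝ) ^ (2:ℝ) = s ^ 2 := fun s => by
      rw [show (2:ℝ) = ((2:ℕ):ℝ) by norm_num, Real.rpow_natCast, sq_abs]
    rw [integral_congr_ae (ae_of_all _ h2), hμw]
    exact integral_sq_gm hw
  have hMem2 : ENNReal.ofReal (2:ℝ) = 2 := by norm_num
  have hf2 : MemLp (fun s : ℝ => |s|) (ENNReal.ofReal 2) μw := by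
    rw [hMem2]
    refine (memLp_two_iff_integrable_sq measurable_abs.aestronglyMeasurable).mpr ?_
    have e2 : (fun s : ℝ => |s| ^ 2) = fun s : ℝ => s ^ 2 := funext fun s => sq_abs s
    rw [e2, hμw]
    exact integrable_sq_gm hw
  have hg2 : MemLp (fun s : ℝ => Real.exp (c * |s|)) (ENNReal.ofReal 2) μw := by
    rw [hMem2]
    refine (memLp_two_iff_integrable_sq
      ((measurable_abs.const_mul c).exp.aestronglyMeasurable)).mpr ?_
    have e2 : (fun s : ℝ => Real.exp (c * |s|) ^ 2) = fun s : ℝ => Real.exp (2 * c * |s|) := by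
      funext s; rw [pow_two, ← Real.exp_add]; ring_nf
    rw [e2, hμw]
    exact integrable_exp_abs_gm hw (2 * c)
  have hconj : Real.HolderConjugate 2 2 := by constructor <;> norm_num
  have hCS := integral_mul_le_Lp_mul_Lq_of_nonneg hconj
    (ae_of_all _ fun s : ℝ => abs_nonneg s) (ae_of_all _ fun s : ℝ => Real.exp_nonneg _)
    hf2 hg2
  rw [hXf, hXeq] at hCS
  have hw2 : ((w:ℝ) ^ 2) ^ ((1:ℝ)/2) = w := by
    rw [← Real.rpow_natCast w 2, ← Real.rpow_mul hw.le]
    norm_num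
  rw [hw2] at hCS
  -- main chain
  calc (∫ ω, |(P {ω' | t - ξ ω ≤ h ω'}).toReal - (P {ω' | t ≤ h ω'}).toReal| ∂P)
      = ∫ s, G s ∂μw := hstep0
    _ ≤ ∫ s, bound s ∂μw := integral_mono_of_nonneg
        (ae_of_all _ fun s => abs_nonneg _) hIbound (ae_of_all _ hpt)
    _ = (μw S).toReal + Cv * ∫ s, |s| * Real.exp (c * |s|) ∂μw := by
        simp only [hbound]
        rw [integral_add hIind (hIae.const_mul Cv), integral_indicator_const (1:ℝ) hSmeas,
          integral_const_mul, smul_eq_mul, mul_one]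
        rfl
    _ ≤ 2 * Real.exp (-t ^ 2 / (2 * w ^ 2)) + Cv * (w * X ^ ((1:ℝ)/2)) := by
        refine add_le_add ?_ (mul_le_mul_of_nonneg_left hCS hCv0)
        rw [hμw, hS]
        exact tail_gm hw ht
    _ = 2 * Real.exp (-t ^ 2 / (2 * w ^ 2))
        + w / (v * Real.sqrt (2 * Real.pi)) * Real.exp (-t ^ 2 / (2 * v ^ 2))
          * X ^ ((1:ℝ)/2) := by
        rw [hCv]
        ring


end PaperFormal
end
end

section
/- Let t > 0 and let h and φ be centered Gaussian random variables with variances v_h² ≥ v_φ² > 0; set Δ² = v_h² − v_φ². Then |P(h ≥ t) − P(φ ≥ t)| ≤ 2·exp(−t²/(2Δ²)) + (Δ/(v_φ√(2π)))·exp(−t²/(2v_φ²))·(E[exp(2tΔ|N|/v_φ²)])^{1/2}, where N is a standard Gaussian random variable (the bound being trivially 0 when Δ = 0). -/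
noncomputable section

namespace PaperFormal

open MeasureTheory ProbabilityTheory Filter Set
open scoped ENNReal NNReal Topology Classical


section GaussAux

open Real

private lemma aux_pdf_exp (c x : ℝ) :
    gaussianPDFReal 0 1 x * Real.exp (c * x)
      = (Real.sqrt (2 * Real.pi))⁻¹
          * (Real.exp (c ^ 2 / 2) * Real.exp (-(1/2) * (x - c) ^ 2)) := by
  simp only [gaussianPDFReal, NNReal.coe_one, mul_one, sub_zero]
  rw [mul_assoc, ← Real.exp_add, ← Real.exp_add]
  congr 2
  ring

private lemma aux_int_gauss (c : ℝ) :
    MeasureTheory.Integrable (fun x => Real.exp (c * x)) (gaussianReal 0 1) := by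
  rw [gaussianReal_of_var_ne_zero 0 one_ne_zero, gaussianPDF_def]
  have hm : Measurable fun x => Real.toNNReal (gaussianPDFReal 0 1 x) :=
    (measurable_gaussianPDFReal 0 1).real_toNNReal
  rw [show (fun x => ENNReal.ofReal (gaussianPDFReal 0 1 x))
      = (fun x => ((Real.toNNReal (gaussianPDFReal 0 1 x) : ℝ≥0) : ℝ≥0∞)) from rfl,
    MeasureTheory.integrable_withDensity_iff_integrable_smul hm]
  have : (fun x => Real.toNNReal (gaussianPDFReal 0 1 x) • Real.exp (c * x))
      = fun x => (Real.sqrt (2 * Real.pi))⁻¹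
          * (Real.exp (c ^ 2 / 2) * Real.exp (-(1/2) * (x - c) ^ 2)) := by
    funext x
    rw [NNReal.smul_def, Real.coe_toNNReal _ (gaussianPDFReal_nonneg 0 1 x), smul_eq_mul,
      aux_pdf_exp]
  rw [this]
  exact ((((integrable_exp_neg_mul_sq (by norm_num : (0:ℝ) < 1/2)).comp_sub_right
    c).const_mul _).const_mul _)

private lemma aux_integral_gauss (c : ℝ) :
    ∫ x, Real.exp (c * x) ∂(gaussianReal 0 1) = Real.exp (c ^ 2 / 2) := by
  rw [gaussianReal_of_var_ne_zero 0 one_ne_zero, gaussianPDF_def]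
  have hm : Measurable fun x => Real.toNNReal (gaussianPDFReal 0 1 x) :=
    (measurable_gaussianPDFReal 0 1).real_toNNReal
  rw [show (fun x => ENNReal.ofReal (gaussianPDFReal 0 1 x))
      = (fun x => ((Real.toNNReal (gaussianPDFReal 0 1 x) : ℝ≥0) : ℝ≥0∞)) from rfl,
    _root_.integral_withDensity_eq_integral_smul hm]
  have : (fun x => Real.toNNReal (gaussianPDFReal 0 1 x) • Real.exp (c * x))
      = fun x => (Real.sqrt (2 * Real.pi))⁻¹
          * (Real.exp (c ^ 2 / 2) * Real.exp (-(1/2) * (x - c) ^ 2)) := by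
    funext x
    rw [NNReal.smul_def, Real.coe_toNNReal _ (gaussianPDFReal_nonneg 0 1 x), smul_eq_mul,
      aux_pdf_exp]
  rw [this]
  rw [integral_const_mul, integral_const_mul,
    MeasureTheory.integral_sub_right_eq_self (fun x => Real.exp (-(1/2) * x ^ 2)) c,
    integral_gaussian, show Real.pi / (1/2 : ℝ) = 2 * Real.pi by ring]
  have h : Real.sqrt (2 * Real.pi) ≠ 0 := by positivity
  field_simp

private lemma aux_int_gauss_abs (c : ℝ) :
    MeasureTheory.Integrable (fun x => Real.exp (c * |x|)) (gaussianReal 0 1) := by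
  refine ((aux_int_gauss c).add (aux_int_gauss (-c))).mono' ?_ ?_
  · exact (Real.continuous_exp.comp (continuous_const.mul continuous_abs)).aestronglyMeasurable
  · filter_upwards with x
    rw [Real.norm_eq_abs, abs_of_pos (Real.exp_pos _)]
    rcases abs_cases x with ⟨h, _⟩ | ⟨h, _⟩
    · rw [h]
      exact le_add_of_nonneg_right (Real.exp_pos _).le
    · rw [h, mul_neg, ← neg_mul]
      exact le_add_of_nonneg_left (Real.exp_pos _).le

private lemma key_alg {t vp vh : ℝ} (ht : 0 < t) (hvp : 0 < vp) (hlt : vp < vh) :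
    (t - t * vp / vh) * gaussianPDFReal 0 (Real.toNNReal (vp ^ 2)) (t * vp / vh)
      ≤ Real.sqrt (vh ^ 2 - vp ^ 2) / (vp * Real.sqrt (2 * Real.pi))
          * Real.exp (-t ^ 2 / (2 * vp ^ 2))
          * Real.exp (t ^ 2 * (vh ^ 2 - vp ^ 2) / vp ^ 4) := by
  have hvh : 0 < vh := hvp.trans hlt
  have hvh' : vh ≠ 0 := hvh.ne'
  have hvp' : vp ≠ 0 := hvp.ne'
  have hD2 : (Real.sqrt (vh ^ 2 - vp ^ 2)) ^ 2 = vh ^ 2 - vp ^ 2 :=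
    Real.sq_sqrt (by nlinarith)
  have hD : 0 < Real.sqrt (vh ^ 2 - vp ^ 2) := Real.sqrt_pos.mpr (by nlinarith)
  set D := Real.sqrt (vh ^ 2 - vp ^ 2) with hDdef
  have hVcoe : ((Real.toNNReal (vp ^ 2) : ℝ≥0) : ℝ) = vp ^ 2 :=
    Real.coe_toNNReal _ (sq_nonneg vp)
  have hpdf : gaussianPDFReal 0 (Real.toNNReal (vp ^ 2)) (t * vp / vh)
      = (vp * Real.sqrt (2 * Real.pi))⁻¹ * Real.exp (-t ^ 2 / (2 * vh ^ 2)) := by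
    simp only [gaussianPDFReal, sub_zero, hVcoe]
    rw [Real.sqrt_mul (by positivity : (0:ℝ) ≤ 2 * Real.pi) (vp ^ 2),
      Real.sqrt_sq hvp.le]
    congr 1
    · rw [mul_comm]
    · congr 1
      field_simp
  rw [hpdf]
  set u := t * D / vp ^ 2 with hudef
  have hu : 0 < u := by positivity
  have h1 : t - t * vp / vh ≤ u * D / 2 := by
    have e2 : u * D / 2 = t * (vh ^ 2 - vp ^ 2) / (2 * vp ^ 2) := by
      rw [hudef, show t * D / vp ^ 2 * D / 2 = t * (D * D) / (2 * vp ^ 2) by ring,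
        ← pow_two, hD2]
    have e1 : t - t * vp / vh = t * (vh - vp) / vh := by
      field_simp
    rw [e1, e2, div_le_div_iff₀ hvh (by positivity)]
    nlinarith [mul_nonneg (mul_nonneg ht.le (sq_nonneg (vh - vp)))
      (by positivity : (0:ℝ) ≤ vh + 2 * vp)]
  have hu2 : u ^ 2 = t ^ 2 * (vh ^ 2 - vp ^ 2) / vp ^ 4 := by
    rw [hudef, show (t * D / vp ^ 2) ^ 2 = t ^ 2 * D ^ 2 / vp ^ 4 by ring, hD2]
  have h3 : Real.exp (-t ^ 2 / (2 * vh ^ 2))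
      ≤ Real.exp (-(u ^ 2) / 2) * (Real.exp (-t ^ 2 / (2 * vp ^ 2))
          * Real.exp (t ^ 2 * (vh ^ 2 - vp ^ 2) / vp ^ 4)) := by
    rw [← Real.exp_add, ← Real.exp_add, Real.exp_le_exp, hu2]
    rw [div_le_iff₀ (by positivity : (0:ℝ) < 2 * vh ^ 2)] at *
    have expand : (-(t ^ 2 * (vh ^ 2 - vp ^ 2) / vp ^ 4) / 2
        + (-t ^ 2 / (2 * vp ^ 2) + t ^ 2 * (vh ^ 2 - vp ^ 2) / vp ^ 4)) * (2 * vh ^ 2)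
        = (t ^ 2 * (vh ^ 2 - vp ^ 2) * vh ^ 2 - t ^ 2 * vp ^ 2 * vh ^ 2) / vp ^ 4 := by
      field_simp
      ring
    rw [expand, le_div_iff₀ (by positivity : (0:ℝ) < vp ^ 4)]
    nlinarith [mul_nonneg (sq_nonneg t) (sq_nonneg (vh ^ 2 - vp ^ 2))]
  have hue : u * Real.exp (-(u ^ 2) / 2) ≤ 2 := by
    have h5 : u ≤ Real.exp (u ^ 2 / 2) := by
      nlinarith [Real.add_one_le_exp (u ^ 2 / 2), sq_nonneg (u - 1)]
    rw [neg_div, Real.exp_neg, mul_inv_le_iff₀ (Real.exp_pos _)]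
    nlinarith [Real.exp_pos (u ^ 2 / 2)]
  calc (t - t * vp / vh) * ((vp * Real.sqrt (2 * Real.pi))⁻¹ * Real.exp (-t ^ 2 / (2 * vh ^ 2)))
      ≤ (u * D / 2) * ((vp * Real.sqrt (2 * Real.pi))⁻¹
          * (Real.exp (-(u ^ 2) / 2) * (Real.exp (-t ^ 2 / (2 * vp ^ 2))
              * Real.exp (t ^ 2 * (vh ^ 2 - vp ^ 2) / vp ^ 4)))) := by
        apply mul_le_mul h1 (mul_le_mul_of_nonneg_left h3 (by positivity)) (by positivity)
          (by positivity)
    _ = (u * Real.exp (-(u ^ 2) / 2) / 2)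
          * (D / (vp * Real.sqrt (2 * Real.pi)) * Real.exp (-t ^ 2 / (2 * vp ^ 2))
              * Real.exp (t ^ 2 * (vh ^ 2 - vp ^ 2) / vp ^ 4)) := by ring
    _ ≤ 1 * (D / (vp * Real.sqrt (2 * Real.pi)) * Real.exp (-t ^ 2 / (2 * vp ^ 2))
              * Real.exp (t ^ 2 * (vh ^ 2 - vp ^ 2) / vp ^ 4)) := by
        apply mul_le_mul_of_nonneg_right (by linarith) (by positivity)
    _ = _ := one_mul _

end GaussAux

/-- **Theorem (Statement 17).** If `h ~ N(0, v_h²)`, `φ ~ N(0, v_φ²)` with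
`v_h² ≥ v_φ² > 0`, `Δ² = v_h² - v_φ²` and `t > 0`, then
`|P(h ≥ t) - P(φ ≥ t)| ≤ 2 exp(-t²/(2Δ²))
  + (Δ/(v_φ √(2π))) exp(-t²/(2v_φ²)) (E[exp(2tΔ|N|/v_φ²)])^{1/2}`,
with `N` a standard Gaussian (the bound being trivially satisfied when `Δ = 0`). -/
theorem gaussian_variance_comparison
    (t vh vp : ℝ) (ht : 0 < t) (hvp : 0 < vp) (hle : vp ≤ vh) :
    |((gaussianReal 0 (Real.toNNReal (vh ^ 2))) {s | t ≤ s}).toReal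
        - ((gaussianReal 0 (Real.toNNReal (vp ^ 2))) {s | t ≤ s}).toReal|
      ≤ 2 * Real.exp (-t ^ 2 / (2 * (vh ^ 2 - vp ^ 2)))
        + Real.sqrt (vh ^ 2 - vp ^ 2) / (vp * Real.sqrt (2 * Real.pi))
            * Real.exp (-t ^ 2 / (2 * vp ^ 2))
            * (∫ s, Real.exp (2 * t * Real.sqrt (vh ^ 2 - vp ^ 2) * |s| / vp ^ 2)
                ∂(gaussianReal 0 1)) ^ ((1 : ℝ) / 2) := by
  rcases eq_or_lt_of_le hle with heq | hlt
  · subst heq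
    rw [sub_self, abs_zero]
    have h1 : (0:ℝ) ≤ ∫ s, Real.exp (2 * t * Real.sqrt (vp ^ 2 - vp ^ 2) * |s| / vp ^ 2)
        ∂(gaussianReal 0 1) := integral_nonneg fun s => (Real.exp_pos _).le
    refine add_nonneg (by positivity) (mul_nonneg (mul_nonneg (by positivity)
      (Real.exp_pos _).le) (Real.rpow_nonneg h1 _))
  · have hvh : 0 < vh := hvp.trans hlt
    have hvh' : vh ≠ 0 := hvh.ne'
    have hvp' : vp ≠ 0 := hvp.ne'
    have hD2 : (Real.sqrt (vh ^ 2 - vp ^ 2)) ^ 2 = vh ^ 2 - vp ^ 2 :=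
      Real.sq_sqrt (by nlinarith)
    have hD : 0 < Real.sqrt (vh ^ 2 - vp ^ 2) := Real.sqrt_pos.mpr (by nlinarith)
    set D := Real.sqrt (vh ^ 2 - vp ^ 2) with hDdef
    have hVcoe : ((Real.toNNReal (vp ^ 2) : ℝ≥0) : ℝ) = vp ^ 2 :=
      Real.coe_toNNReal _ (sq_nonneg vp)
    have hV0 : Real.toNNReal (vp ^ 2) ≠ 0 := by
      simp only [ne_eq, Real.toNNReal_eq_zero, not_le]
      positivity
    set t' := t * vp / vh with ht'def
    have ht'0 : 0 ≤ t' := by positivity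
    have ht't : t' ≤ t := by
      rw [ht'def, div_le_iff₀ hvh]
      nlinarith
    have hmap : (gaussianReal 0 (Real.toNNReal (vp ^ 2))).map (fun x => (vh / vp) * x)
        = gaussianReal 0 (Real.toNNReal (vh ^ 2)) := by
      rw [gaussianReal_map_const_mul (vh / vp), mul_zero]
      congr 1
      apply NNReal.coe_injective
      rw [NNReal.coe_mul, hVcoe, Real.coe_toNNReal _ (sq_nonneg vh)]
      show (vh / vp) ^ 2 * vp ^ 2 = vh ^ 2
      field_simp
    have hXY : (gaussianReal 0 (Real.toNNReal (vh ^ 2))) (Set.Ici t)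
        = (gaussianReal 0 (Real.toNNReal (vp ^ 2))) (Set.Ici t') := by
      rw [← hmap, Measure.map_apply (measurable_id'.const_mul _) measurableSet_Ici]
      congr 1
      ext x
      simp only [Set.mem_preimage, Set.mem_setOf_eq, Set.mem_Ici]
      rw [mul_comm (vh / vp) x, ← div_le_iff₀ (by positivity : (0:ℝ) < vh / vp),
        div_div_eq_mul_div, ← ht'def]
    have hsplit : (gaussianReal 0 (Real.toNNReal (vp ^ 2))) (Set.Ici t')
        = (gaussianReal 0 (Real.toNNReal (vp ^ 2))) (Set.Ici t)
          + (gaussianReal 0 (Real.toNNReal (vp ^ 2))) (Set.Ico t' t) := by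
      rw [← Set.Ico_union_Ici_eq_Ici ht't,
        measure_union ((Set.Iio_disjoint_Ici le_rfl).mono_left Set.Ico_subset_Iio_self)
          measurableSet_Ici, add_comm]
    have habs : |((gaussianReal 0 (Real.toNNReal (vh ^ 2))) {s | t ≤ s}).toReal
        - ((gaussianReal 0 (Real.toNNReal (vp ^ 2))) {s | t ≤ s}).toReal|
        = ((gaussianReal 0 (Real.toNNReal (vp ^ 2))) (Set.Ico t' t)).toReal := by
      rw [show {s : ℝ | t ≤ s} = Set.Ici t from rfl, hXY, hsplit,
        ENNReal.toReal_add (measure_ne_top _ _) (measure_ne_top _ _),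
        add_sub_cancel_left]
      exact abs_of_nonneg ENNReal.toReal_nonneg
    have hIco : ((gaussianReal 0 (Real.toNNReal (vp ^ 2))) (Set.Ico t' t)).toReal
        = ∫ x in Set.Ico t' t, gaussianPDFReal 0 (Real.toNNReal (vp ^ 2)) x := by
      rw [gaussianReal_apply_eq_integral 0 hV0, ENNReal.toReal_ofReal]
      exact setIntegral_nonneg measurableSet_Ico fun x _ => gaussianPDFReal_nonneg _ _ _
    have hbound : ∫ x in Set.Ico t' t, gaussianPDFReal 0 (Real.toNNReal (vp ^ 2)) x
        ≤ (t - t') * gaussianPDFReal 0 (Real.toNNReal (vp ^ 2)) t' := by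
      have hmono : ∀ x ∈ Set.Ico t' t, gaussianPDFReal 0 (Real.toNNReal (vp ^ 2)) x
          ≤ gaussianPDFReal 0 (Real.toNNReal (vp ^ 2)) t' := by
        intro x hx
        simp only [gaussianPDFReal, sub_zero, hVcoe]
        apply mul_le_mul_of_nonneg_left _ (by positivity)
        apply Real.exp_le_exp.mpr
        rw [neg_div, neg_div, neg_le_neg_iff]
        gcongr
        all_goals first
          | positivity
          | exact ht'0
          | exact hx.1
      calc ∫ x in Set.Ico t' t, gaussianPDFReal 0 (Real.toNNReal (vp ^ 2)) x
          ≤ ∫ _x in Set.Ico t' t, gaussianPDFReal 0 (Real.toNNReal (vp ^ 2)) t' :=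
            setIntegral_mono_on ((integrable_gaussianPDFReal _ _).integrableOn)
              (integrableOn_const measure_Ico_lt_top.ne) measurableSet_Ico hmono
        _ = (t - t') * gaussianPDFReal 0 (Real.toNNReal (vp ^ 2)) t' := by
            rw [setIntegral_const, Real.volume_real_Ico_of_le ht't, smul_eq_mul]
    have hc : (0:ℝ) ≤ 2 * t * D / vp ^ 2 := by positivity
    have hInt : Real.exp ((2 * t * D / vp ^ 2) ^ 2 / 2)
        ≤ ∫ s, Real.exp (2 * t * D * |s| / vp ^ 2) ∂(gaussianReal 0 1) := by
      have hform : (fun s : ℝ => Real.exp (2 * t * D * |s| / vp ^ 2))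
          = fun s => Real.exp ((2 * t * D / vp ^ 2) * |s|) := by
        funext s
        congr 1
        ring
      rw [hform, ← aux_integral_gauss (2 * t * D / vp ^ 2)]
      exact integral_mono (aux_int_gauss _) (aux_int_gauss_abs _)
        fun s => Real.exp_le_exp.mpr (mul_le_mul_of_nonneg_left (le_abs_self s) hc)
    have hrpow : Real.exp (t ^ 2 * (vh ^ 2 - vp ^ 2) / vp ^ 4)
        ≤ (∫ s, Real.exp (2 * t * D * |s| / vp ^ 2) ∂(gaussianReal 0 1)) ^ ((1:ℝ) / 2) := by
      have h := Real.rpow_le_rpow (Real.exp_pos _).le hInt (by norm_num : (0:ℝ) ≤ 1 / 2)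
      rwa [Real.rpow_def_of_pos (Real.exp_pos _), Real.log_exp,
        show (2 * t * D / vp ^ 2) ^ 2 / 2 * ((1:ℝ) / 2)
          = t ^ 2 * D ^ 2 / vp ^ 4 by ring, hD2] at h
    rw [habs, hIco]
    calc ∫ x in Set.Ico t' t, gaussianPDFReal 0 (Real.toNNReal (vp ^ 2)) x
        ≤ (t - t') * gaussianPDFReal 0 (Real.toNNReal (vp ^ 2)) t' := hbound
      _ ≤ D / (vp * Real.sqrt (2 * Real.pi)) * Real.exp (-t ^ 2 / (2 * vp ^ 2))
            * Real.exp (t ^ 2 * (vh ^ 2 - vp ^ 2) / vp ^ 4) := key_alg ht hvp hlt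
      _ ≤ D / (vp * Real.sqrt (2 * Real.pi)) * Real.exp (-t ^ 2 / (2 * vp ^ 2))
            * (∫ s, Real.exp (2 * t * D * |s| / vp ^ 2) ∂(gaussianReal 0 1)) ^ ((1:ℝ) / 2) :=
          mul_le_mul_of_nonneg_left hrpow (by positivity)
      _ ≤ _ := le_add_of_nonneg_left (by positivity)


end PaperFormal
end
end
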